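/- arXiv:2012.13886 — 9 statements merged into one kernel-verified Lean document; each statement's English description precedes it below -/
import Mathlib

section
/- Let n be a positive integer and suppose c_n < 1, where c_n is the supremum of the ratios |X_{n,φ}(H)|/|H| over all finite groups H and automorphisms φ of H with φⁿ = id for which this ratio is strictly less than 1. Then for any finite group G with H_n(G) := ⟨x ∈ G : xⁿ ≠ 1⟩ nontrivial, the index |G : H_n(G)| is strictly less than 1/(1 - c_n). -/
/-- Suppose `c < 1` is an upper bound for all the ratios
`|X_{n,φ}(H)| / |H|` (over finite groups `H` and automorphisms `φ` with `φ ^ n = 1`)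
that are strictly less than `1` (i.e. `c_n ≤ c < 1`).  Then for every finite group `G`
whose generalized Hughes–Thompson subgroup `H_n(G) = ⟨x : x ^ n ≠ 1⟩` is nontrivial,
the index `|G : H_n(G)|` is strictly less than `1 / (1 - c)`. -/
theorem index_HughesThompson_lt (n : ℕ) (hn : 0 < n) (c : ℝ) (hc : c < 1)
    (hub : ∀ (H : Type) [Group H] [Fintype H] (φ : MulAut H), φ ^ n = 1 →
      (Nat.card {x : H | ((List.range n).map fun i => (φ ^ i) x).prod = 1} : ℝ) /
          Nat.card H < 1 →
      (Nat.card {x : H | ((List.range n).map fun i => (φ ^ i) x).prod = 1} : ℝ) /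
          Nat.card H ≤ c)
    (G : Type) [Group G] [Fintype G]
    (hG : Subgroup.closure {x : G | x ^ n ≠ 1} ≠ ⊥) :
    ((Subgroup.closure {x : G | x ^ n ≠ 1}).index : ℝ) < 1 / (1 - c) := by
  classical
  set K := Subgroup.closure {x : G | x ^ n ≠ 1} with hKdef
  set X : Set G := {x : G | ((List.range n).map fun i => ((1 : MulAut G) ^ i) x).prod = 1}
    with hXdef
  have hXeq : X = {x : G | x ^ n = 1} := by
    ext x
    simp [hXdef, List.map_const', List.prod_replicate]
  -- there is an element with x^n ≠ 1
  have hSne : {x : G | x ^ n ≠ 1}.Nonempty := by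
    by_contra h
    rw [Set.not_nonempty_iff_eq_empty] at h
    exact hG (by rw [hKdef, h, Subgroup.closure_empty])
  obtain ⟨x₀, hx₀⟩ := hSne
  -- X ≠ univ
  have hXne : X ≠ Set.univ := by
    intro h
    apply hx₀
    have : x₀ ∈ X := h ▸ Set.mem_univ x₀
    rwa [hXeq] at this
  have hXlt : X.ncard < Nat.card G := by
    have : X ⊂ Set.univ := (Set.ssubset_univ_iff).2 hXne
    calc X.ncard < (Set.univ : Set G).ncard :=
          Set.ncard_lt_ncard this (Set.finite_univ)
      _ = Nat.card G := by simp [Set.ncard_univ]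
  -- cardinality lower bound for X
  have hsub : ((K : Set G)ᶜ ∪ {1}) ⊆ X := by
    intro x hx
    rw [hXeq]
    rcases hx with hx | hx
    · by_contra hxn
      exact hx (Subgroup.subset_closure hxn)
    · simp_all
  have hdisj : Disjoint ((K : Set G)ᶜ) ({1} : Set G) := by
    rw [Set.disjoint_singleton_right]
    exact fun h => h (K.one_mem)
  have hcard1 : ((K : Set G)ᶜ).ncard + 1 ≤ X.ncard := by
    have := Set.ncard_le_ncard hsub (Set.toFinite X)
    rwa [Set.ncard_union_eq hdisj (Set.toFinite _) (Set.toFinite _),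
      Set.ncard_singleton] at this
  have hcompl : (K : Set G).ncard + ((K : Set G)ᶜ).ncard = Nat.card G :=
    Set.ncard_add_ncard_compl _
  have hKcard : (K : Set G).ncard = Nat.card K := by
    rw [Set.ncard_eq_toFinset_card', ← Nat.card_eq_card_toFinset]; rfl
  have hg0 : 0 < Nat.card G := Nat.card_pos
  have hk0 : 0 < Nat.card K := Nat.card_pos
  -- apply hub
  have hNX : Nat.card X = X.ncard := (Nat.card_coe_set_eq X)
  have hratio : (Nat.card X : ℝ) / Nat.card G < 1 := by
    rw [div_lt_one (by exact_mod_cast hg0)]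
    exact_mod_cast hNX ▸ hXlt
  have hle : (Nat.card X : ℝ) / Nat.card G ≤ c := hub G 1 (one_pow n) hratio
  have hXc : (Nat.card X : ℝ) ≤ c * Nat.card G := by
    rw [div_le_iff₀ (by exact_mod_cast hg0)] at hle
    linarith
  -- combine: (g - k) + 1 ≤ |X| ≤ c g
  have hkc : (((K : Set G)ᶜ).ncard : ℝ) = (Nat.card G : ℝ) - Nat.card K := by
    have := hcompl
    rw [hKcard] at this
    have : ((Nat.card K : ℝ)) + (((K : Set G)ᶜ).ncard : ℝ) = Nat.card G := by
      exact_mod_cast this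
    linarith
  have hkey : (1 - c) * Nat.card G < Nat.card K := by
    have h1 : (((K : Set G)ᶜ).ncard : ℝ) + 1 ≤ (Nat.card X : ℝ) := by
      exact_mod_cast hNX ▸ hcard1
    rw [hkc] at h1
    nlinarith
  have h1c : (0 : ℝ) < 1 - c := by linarith
  have hidx : (K.index : ℝ) * Nat.card K = Nat.card G := by
    exact_mod_cast congrArg (Nat.cast : ℕ → ℝ) (Subgroup.index_mul_card K)
  rw [lt_div_iff₀ h1c]
  have hkR : (0 : ℝ) < Nat.card K := by exact_mod_cast hk0
  rw [← mul_lt_mul_iff_left₀ hkR]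
  calc (K.index : ℝ) * (1 - c) * Nat.card K = (1 - c) * ((K.index : ℝ) * Nat.card K) := by
        ring
    _ = (1 - c) * Nat.card G := by rw [hidx]
    _ < Nat.card K := hkey
    _ = 1 * Nat.card K := by ring
end

section
/- Let G be a finite group, A a nonempty subset of G, and N a normal subgroup of G of index r. Let s be the number of cosets of N meeting A, and let x ∈ G be such that |Nx ∩ A| is maximal among all cosets. Then |A|/|G| ≤ s·|Nx ∩ A|/|G| and (r - s)·|N|/|G| ≤ 1 - |A|/|G|; consequently (|A|/|G|)/(1 - |A|/|G|) · (r - s)/s ≤ |Nx ∩ A|/|N| whenever |A| < |G|. -/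
open Pointwise

lemma coset_eq_preimage {G : Type*} [Group G] (N : Subgroup G) [hN : N.Normal] (g : G) :
    ((N : Set G) * {g}) = QuotientGroup.mk ⁻¹' {(QuotientGroup.mk g : G ⧸ N)} := by
  ext y
  simp only [Set.mem_mul, Set.mem_preimage, Set.mem_singleton_iff, SetLike.mem_coe,
    QuotientGroup.eq]
  constructor
  · rintro ⟨n, hn, z, rfl, rfl⟩
    have : z⁻¹ * n⁻¹ * (z⁻¹)⁻¹ ∈ N := hN.conj_mem _ (inv_mem hn) _
    simpa [mul_assoc] using this
  · intro h
    refine ⟨y * g⁻¹, ?_, g, rfl, by group⟩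
    have : g * (y⁻¹ * g) * g⁻¹ ∈ N := hN.conj_mem _ h _
    have := inv_mem this
    simpa [mul_assoc] using this

lemma coset_ncard {G : Type*} [Group G] (N : Subgroup G) (g : G) :
    ((N : Set G) * {g}).ncard = Nat.card N := by
  rw [Set.mul_singleton, Set.ncard_image_of_injective _ (mul_left_injective g),
    ← Nat.card_coe_set_eq]
  rfl

lemma coset_counting_nat {G : Type*} [Group G] [Fintype G]
    (A : Set G) (hA : A.Nonempty) (N : Subgroup G) [N.Normal]
    (r s : ℕ) (hr : r = N.index)
    (hs : s = ((QuotientGroup.mk : G → G ⧸ N) '' A).ncard)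
    (x : G)
    (hx : ∀ g : G, (((N : Set G) * {g}) ∩ A).ncard ≤ (((N : Set G) * {x}) ∩ A).ncard) :
    A.ncard ≤ s * (((N : Set G) * {x}) ∩ A).ncard ∧
    A.ncard + (r - s) * Nat.card N ≤ Nat.card G ∧ s ≤ r ∧ 0 < s := by
  classical
  haveI : Fintype ↥A := Fintype.ofFinite _
  haveI : Fintype (G ⧸ N) := Fintype.ofFinite _
  set f : G → G ⧸ N := QuotientGroup.mk with hf
  set T : Finset (G ⧸ N) := A.toFinset.image f with hT
  set m : ℕ := (((N : Set G) * {x}) ∩ A).ncard with hm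
  have fibset : ∀ q : G ⧸ N, ∃ g : G, f g = q ∧
      (f ⁻¹' {q} : Set G) = (N : Set G) * {g} := by
    intro q
    obtain ⟨g, rfl⟩ := Quotient.exists_rep q
    exact ⟨g, rfl, (coset_eq_preimage N g).symm⟩
  have hsT : s = T.card := by
    rw [hs, ← Set.ncard_coe_finset T, hT, Finset.coe_image, Set.coe_toFinset]
  have filt_card : ∀ q : G ⧸ N,
      (A.toFinset.filter (fun a => f a = q)).card = ((f ⁻¹' {q}) ∩ A).ncard := by
    intro q
    rw [← Set.ncard_coe_finset]
    congr 1
    ext y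
    simp only [Finset.coe_filter, Set.mem_toFinset, Set.mem_setOf_eq, Set.mem_inter_iff,
      Set.mem_preimage, Set.mem_singleton_iff]
    tauto
  have hbound : ∀ q : G ⧸ N, (A.toFinset.filter (fun a => f a = q)).card ≤ m := by
    intro q
    obtain ⟨g, hg, hpre⟩ := fibset q
    rw [filt_card, hpre]
    exact hx g
  have hAc : A.ncard = A.toFinset.card := Set.ncard_eq_toFinset_card' A
  have hsum : A.toFinset.card = ∑ q ∈ T, (A.toFinset.filter (fun a => f a = q)).card :=
    Finset.card_eq_sum_card_fiberwise (fun a ha => Finset.mem_image_of_mem f ha)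
  have key1 : A.ncard ≤ s * m := by
    calc A.ncard = ∑ q ∈ T, (A.toFinset.filter (fun a => f a = q)).card := by
          rw [hAc, hsum]
      _ ≤ ∑ _q ∈ T, m := Finset.sum_le_sum (fun q _ => hbound q)
      _ = T.card * m := by rw [Finset.sum_const, smul_eq_mul]
      _ = s * m := by rw [hsT]
  have hrcard : r = Fintype.card (G ⧸ N) := by
    rw [hr, ← Nat.card_eq_fintype_card]
    exact Subgroup.index_eq_card N
  have hsr : s ≤ r := by
    rw [hsT, hrcard]; exact Finset.card_le_univ T
  have hspos : 0 < s := by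
    rw [hsT, hT]
    exact Finset.card_pos.mpr ((Finset.image_nonempty).mpr (Set.toFinset_nonempty.mpr hA))
  have full_fib : ∀ q : G ⧸ N,
      ((Finset.univ : Finset G).filter (fun a => f a = q)).card = Nat.card N := by
    intro q
    obtain ⟨g, hg, hpre⟩ := fibset q
    rw [← coset_ncard N g, ← hpre, ← Set.ncard_coe_finset]
    congr 1
    ext y
    simp [Set.mem_preimage]
  have key2 : A.ncard + (r - s) * Nat.card N ≤ Nat.card G := by
    have hG : Nat.card G
        = ∑ q : G ⧸ N, ((Finset.univ : Finset G).filter (fun a => f a = q)).card := by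
      rw [Nat.card_eq_fintype_card, ← Finset.card_univ]
      exact Finset.card_eq_sum_card_fiberwise (fun a _ => Finset.mem_univ _)
    have hsplit : ∑ q : G ⧸ N, ((Finset.univ : Finset G).filter (fun a => f a = q)).card
        = ∑ q ∈ T, ((Finset.univ : Finset G).filter (fun a => f a = q)).card
          + ∑ q ∈ Finset.univ \ T, ((Finset.univ : Finset G).filter (fun a => f a = q)).card := by
      rw [add_comm, Finset.sum_sdiff (Finset.subset_univ T)]
    have h1 : A.ncard ≤ ∑ q ∈ T, ((Finset.univ : Finset G).filter (fun a => f a = q)).card := by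
      rw [hAc, hsum]
      exact Finset.sum_le_sum (fun q _ =>
        Finset.card_le_card (Finset.filter_subset_filter _ (Finset.subset_univ _)))
    have h2 : ∑ q ∈ Finset.univ \ T, ((Finset.univ : Finset G).filter (fun a => f a = q)).card
        = (r - s) * Nat.card N := by
      rw [Finset.sum_congr rfl (fun q _ => full_fib q), Finset.sum_const, smul_eq_mul,
        Finset.card_sdiff_of_subset (Finset.subset_univ T), Finset.card_univ, ← hrcard, ← hsT]
    omega
  exact ⟨key1, key2, hsr, hspos⟩

lemma coset_real_part (a m n gg ss rr : ℝ) (hm : 0 ≤ m) (hn : 0 < n) (hgg : 0 < gg)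
    (h1 : a ≤ ss * m) (h2 : a + (rr - ss) * n ≤ gg) (hss : 0 < ss) (hsr : ss ≤ rr)
    (hlt : a < gg) :
    a / gg / (1 - a / gg) * ((rr - ss) / ss) ≤ m / n := by
  have hga : 0 < gg - a := by linarith
  have e1 : 1 - a / gg = (gg - a) / gg := by field_simp
  have e2 : a / gg / ((gg - a) / gg) = a / (gg - a) := by
    field_simp
  rw [e1, e2, div_mul_div_comm, div_le_div_iff₀ (by positivity) hn]
  have hrs : 0 ≤ rr - ss := by linarith
  nlinarith [mul_le_mul_of_nonneg_right h1 (mul_nonneg hrs hn.le),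
    mul_le_mul_of_nonneg_left (show (rr - ss) * n ≤ gg - a by linarith)
      (mul_nonneg hss.le hm)]

/-- Let `G` be a finite group, `A` a nonempty subset, `N ⊴ G` of index `r`,
`s` the number of cosets of `N` meeting `A`, and `x` an element whose coset `N x`
maximizes `|N g ∩ A|`.  Then `|A|/|G| ≤ s * |N x ∩ A| / |G|`,
`(r - s) * |N| / |G| ≤ 1 - |A|/|G|`, and, whenever `|A| < |G|`,
`(|A|/|G|) / (1 - |A|/|G|) * ((r - s)/s) ≤ |N x ∩ A| / |N|`. -/
theorem coset_counting_inequalities {G : Type*} [Group G] [Fintype G]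
    (A : Set G) (hA : A.Nonempty) (N : Subgroup G) [N.Normal]
    (r s : ℕ) (hr : r = N.index)
    (hs : s = ((QuotientGroup.mk : G → G ⧸ N) '' A).ncard)
    (x : G)
    (hx : ∀ g : G, (((N : Set G) * {g}) ∩ A).ncard ≤ (((N : Set G) * {x}) ∩ A).ncard) :
    (A.ncard : ℝ) / Nat.card G ≤
        s * ((((N : Set G) * {x}) ∩ A).ncard : ℝ) / Nat.card G ∧
      ((r : ℝ) - s) * Nat.card N / Nat.card G ≤ 1 - (A.ncard : ℝ) / Nat.card G ∧
      (A.ncard < Nat.card G →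
        ((A.ncard : ℝ) / Nat.card G) / (1 - (A.ncard : ℝ) / Nat.card G) *
            (((r : ℝ) - s) / s) ≤
          ((((N : Set G) * {x}) ∩ A).ncard : ℝ) / Nat.card N) := by
  obtain ⟨key1, key2, hsr, hspos⟩ := coset_counting_nat A hA N r s hr hs x hx
  have hgg : (0 : ℝ) < Nat.card G := by
    have : 0 < Nat.card G := Nat.card_pos
    exact_mod_cast this
  have hn : (0 : ℝ) < Nat.card N := by
    have : 0 < Nat.card N := Nat.card_pos
    exact_mod_cast this
  have h1R : (A.ncard : ℝ) ≤ (s : ℝ) * ((((N : Set G) * {x}) ∩ A).ncard : ℝ) := by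
    exact_mod_cast key1
  have h2R : (A.ncard : ℝ) + ((r : ℝ) - s) * Nat.card N ≤ Nat.card G := by
    have := key2
    have hcast : ((r - s : ℕ) : ℝ) = (r : ℝ) - s := Nat.cast_sub hsr
    calc (A.ncard : ℝ) + ((r : ℝ) - s) * Nat.card N
        = ((A.ncard + (r - s) * Nat.card N : ℕ) : ℝ) := by push_cast [hcast]; ring
      _ ≤ Nat.card G := by exact_mod_cast this
  refine ⟨?_, ?_, ?_⟩
  · gcongr
  · have e : (1 - (A.ncard : ℝ) / Nat.card G) * Nat.card G
        = Nat.card G - A.ncard := by field_simp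
    rw [div_le_iff₀ hgg, e]
    linarith
  · intro hlt
    have hltR : (A.ncard : ℝ) < Nat.card G := by exact_mod_cast hlt
    have hssR : (0 : ℝ) < s := by exact_mod_cast hspos
    have hsrR : (s : ℝ) ≤ r := by exact_mod_cast hsr
    exact coset_real_part _ _ _ _ _ _ (by positivity) hn hgg h1R h2R hssR hsrR hltR
end

section
/- Let G be a profinite group, A a closed subset of G with positive Haar measure, and M a normal open subgroup of G. Let 𝒳 be the set of all normal open subgroups of G contained in M. Then sup{ m(Ng ∩ A)/m(N) : g ∈ G, N ∈ 𝒳 } = 1. -/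
open MeasureTheory Pointwise

lemma coset_eq_smul' {G : Type*} [Group G] (N : Subgroup G) [hN : N.Normal] (g : G) :
    ((N : Set G) * {g}) = g • (N : Set G) := by
  ext x
  simp only [Set.mem_mul, Set.mem_singleton_iff, Set.mem_smul_set, SetLike.mem_coe,
    smul_eq_mul]
  constructor
  · rintro ⟨n, hn, y, rfl, rfl⟩
    exact ⟨y⁻¹ * n * y, hN.conj_mem' n hn y, by group⟩
  · rintro ⟨n, hn, rfl⟩
    exact ⟨g * n * g⁻¹, hN.conj_mem n hn g, g, rfl, by group⟩

lemma preimage_mk_singleton' {G : Type*} [Group G] (N : Subgroup G) [N.Normal] (g : G) :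
    QuotientGroup.mk ⁻¹' {((g : G) : G ⧸ N)} = g • (N : Set G) := by
  ext x
  simp only [Set.mem_preimage, Set.mem_singleton_iff, Set.mem_smul_set_iff_inv_smul_mem,
    smul_eq_mul, SetLike.mem_coe]
  rw [QuotientGroup.eq]
  exact ⟨fun h => by simpa using N.inv_mem h, fun h => by simpa using N.inv_mem h⟩

/-- Let `G` be a profinite group with normalized Haar measure `μ`, `A` a
closed subset of positive measure, and `M` a normal open subgroup.  Then the supremum of
the ratios `μ(N g ∩ A) / μ(N)`, over elements `g ∈ G` and normal open subgroups `N ≤ M`,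
equals `1`. -/
theorem sSup_coset_ratio_eq_one {G : Type*} [Group G] [TopologicalSpace G]
    [IsTopologicalGroup G] [CompactSpace G] [TotallyDisconnectedSpace G] [T2Space G]
    [MeasurableSpace G] [BorelSpace G]
    (μ : Measure G) [μ.IsHaarMeasure] [IsProbabilityMeasure μ]
    (A : Set G) (hA : IsClosed A) (hApos : 0 < μ A)
    (M : Subgroup G) [M.Normal] (hM : IsOpen (M : Set G)) :
    sSup {ρ : ℝ | ∃ (N : Subgroup G) (g : G), N.Normal ∧ IsOpen (N : Set G) ∧ N ≤ M ∧
        ρ = (μ (((N : Set G) * {g}) ∩ A)).toReal / (μ (N : Set G)).toReal} = 1 := by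
  classical
  set S : Set ℝ := {ρ : ℝ | ∃ (N : Subgroup G) (g : G), N.Normal ∧ IsOpen (N : Set G) ∧ N ≤ M ∧
      ρ = (μ (((N : Set G) * {g}) ∩ A)).toReal / (μ (N : Set G)).toReal} with hSdef
  have hub : ∀ ρ ∈ S, ρ ≤ 1 := by
    rintro ρ ⟨N, g, hN, hNopen, hNle, rfl⟩
    have hNpos : 0 < μ (N : Set G) := hNopen.measure_pos μ ⟨1, N.one_mem⟩
    have hcoset : μ (((N : Set G) * {g}) ∩ A) ≤ μ (N : Set G) := by
      calc μ (((N : Set G) * {g}) ∩ A) ≤ μ ((N : Set G) * {g}) :=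
            measure_mono Set.inter_subset_left
        _ = μ (g • (N : Set G)) := by rw [coset_eq_smul']
        _ = μ (N : Set G) := measure_smul μ g _
    rw [div_le_one (ENNReal.toReal_pos hNpos.ne' (measure_ne_top μ _))]
    exact ENNReal.toReal_mono (measure_ne_top μ _) hcoset
  have hSne : S.Nonempty := ⟨_, M, 1, ‹M.Normal›, hM, le_refl M, rfl⟩
  have hbdd : BddAbove S := ⟨1, hub⟩
  refine le_antisymm (Real.sSup_le hub zero_le_one) ?_
  set r := sSup S with hr
  have hr0 : 0 ≤ r := by
    obtain ⟨ρ, hρ⟩ := hSne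
    refine le_trans ?_ (le_csSup hbdd hρ)
    obtain ⟨N, g, _, _, _, rfl⟩ := hρ
    positivity
  have hAne : μ A ≠ ⊤ := measure_ne_top μ A
  have haR : 0 < (μ A).toReal := ENNReal.toReal_pos hApos.ne' hAne
  -- key estimate
  have key : ∀ δ : ℝ, 0 < δ → (μ A).toReal ≤ r * ((μ A).toReal + δ) := by
    intro δ hδ
    obtain ⟨U, hAU, hUopen, hUlt⟩ := A.exists_isOpen_lt_of_lt (μ A + ENNReal.ofReal δ)
      (by exact ENNReal.lt_add_right hAne (by simpa using hδ))
    obtain ⟨V, hV1, hVAU⟩ :=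
      compact_open_separated_mul_right (hA.isCompact) hUopen hAU
    obtain ⟨W, hWclopen, h1W, hWV⟩ := compact_exists_isClopen_in_isOpen isOpen_interior
      (mem_interior_iff_mem_nhds.2 hV1)
    obtain ⟨N₀, hN₀W⟩ :=
      IsTopologicalGroup.exist_openNormalSubgroup_sub_clopen_nhds_of_one hWclopen h1W
    set N : Subgroup G := N₀.toSubgroup ⊓ M with hNdef
    haveI hNnorm : N.Normal := by
      constructor
      intro n hn g
      rw [Subgroup.mem_inf] at hn ⊢
      exact ⟨N₀.isNormal'.conj_mem n hn.1 g, ‹M.Normal›.conj_mem n hn.2 g⟩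
    have hNopen : IsOpen (N : Set G) := by
      rw [hNdef, Subgroup.coe_inf]
      exact N₀.isOpen.inter hM
    have hNle : N ≤ M := inf_le_right
    have hNV : (N : Set G) ⊆ V := by
      intro x hx
      rw [hNdef, Subgroup.coe_inf] at hx
      exact interior_subset (hWV (hN₀W hx.1))
    have hNpos : 0 < μ (N : Set G) := hNopen.measure_pos μ ⟨1, N.one_mem⟩
    have hNR : 0 < (μ (N : Set G)).toReal :=
      ENNReal.toReal_pos hNpos.ne' (measure_ne_top μ _)
    haveI : Finite (G ⧸ N) := Subgroup.quotient_finite_of_isOpen N hNopen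
    haveI : Fintype (G ⧸ N) := Fintype.ofFinite _
    set C : G ⧸ N → Set G := fun q => QuotientGroup.mk ⁻¹' {q} with hCdef
    have hCmk : ∀ g : G, C (QuotientGroup.mk g) = g • (N : Set G) := fun g =>
      preimage_mk_singleton' N g
    have hCmeas : ∀ q : G ⧸ N, MeasurableSet (C q) := by
      intro q
      induction q using QuotientGroup.induction_on with
      | H g => rw [hCmk]; exact (hNopen.smul g).measurableSet
    have hCμ : ∀ q : G ⧸ N, μ (C q) = μ (N : Set G) := by
      intro q
      induction q using QuotientGroup.induction_on with
      | H g => rw [hCmk]; exact measure_smul μ g _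
    set Q₀ : Finset (G ⧸ N) := Finset.univ.filter (fun q => (C q ∩ A).Nonempty) with hQ₀
    have hcover : A ⊆ ⋃ q ∈ Q₀, C q ∩ A := by
      intro a ha
      have hmem : a ∈ C (QuotientGroup.mk a) ∩ A := ⟨rfl, ha⟩
      have : (QuotientGroup.mk a : G ⧸ N) ∈ Q₀ := by
        rw [hQ₀, Finset.mem_filter]
        exact ⟨Finset.mem_univ _, ⟨a, hmem⟩⟩
      exact Set.mem_biUnion this hmem
    have hdisj : (↑Q₀ : Set (G ⧸ N)).PairwiseDisjoint C := by
      intro q1 _ q2 _ hne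
      exact Set.disjoint_left.2 fun x hx1 hx2 => hne (hx1.symm.trans hx2)
    have hsumC : ∑ q ∈ Q₀, μ (C q) = μ (⋃ q ∈ Q₀, C q) :=
      (measure_biUnion_finset hdisj fun q _ => hCmeas q).symm
    have hUnionU : (⋃ q ∈ Q₀, C q) ⊆ U := by
      intro x hx
      obtain ⟨q, hq, hxq⟩ := Set.mem_iUnion₂.1 hx
      rw [hQ₀, Finset.mem_filter] at hq
      obtain ⟨a, haC, haA⟩ := hq.2
      have hqa : q = QuotientGroup.mk a := haC.symm
      rw [hqa, hCmk] at hxq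
      obtain ⟨n, hn, rfl⟩ := hxq
      exact hVAU (Set.mul_mem_mul haA (hNV hn))
    -- each coset ratio is in S
    have hratio : ∀ q ∈ Q₀, (μ (C q ∩ A)).toReal ≤ r * (μ (N : Set G)).toReal := by
      intro q hq
      rw [hQ₀, Finset.mem_filter] at hq
      obtain ⟨a, haC, haA⟩ := hq.2
      have hqa : q = QuotientGroup.mk a := haC.symm
      have hmemS : (μ (C q ∩ A)).toReal / (μ (N : Set G)).toReal ∈ S := by
        refine ⟨N, a, hNnorm, hNopen, hNle, ?_⟩
        rw [hqa, hCmk, coset_eq_smul']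
      have := le_csSup hbdd hmemS
      rw [div_le_iff₀ hNR] at this
      linarith
    -- put it together, in ℝ
    have h1 : (μ A).toReal ≤ ∑ q ∈ Q₀, (μ (C q ∩ A)).toReal := by
      have : μ A ≤ ∑ q ∈ Q₀, μ (C q ∩ A) :=
        (measure_mono hcover).trans (measure_biUnion_finset_le Q₀ _)
      have h2 := ENNReal.toReal_mono (by
        exact (ENNReal.sum_lt_top.2 fun q _ => (measure_ne_top μ _).lt_top).ne) this
      rwa [ENNReal.toReal_sum (fun q _ => measure_ne_top μ _)] at h2
    have h3 : ∑ q ∈ Q₀, (μ (C q ∩ A)).toReal ≤ r * (μ (⋃ q ∈ Q₀, C q)).toReal := by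
      calc ∑ q ∈ Q₀, (μ (C q ∩ A)).toReal ≤ ∑ q ∈ Q₀, r * (μ (N : Set G)).toReal :=
            Finset.sum_le_sum hratio
        _ = r * ∑ q ∈ Q₀, (μ (C q)).toReal := by
            rw [Finset.mul_sum]; congr 1; ext q; rw [hCμ q]
        _ = r * (μ (⋃ q ∈ Q₀, C q)).toReal := by
            rw [← ENNReal.toReal_sum (fun q _ => measure_ne_top μ _), hsumC]
    have h4 : (μ (⋃ q ∈ Q₀, C q)).toReal ≤ (μ A).toReal + δ := by
      have hle2 : μ (⋃ q ∈ Q₀, C q) ≤ μ A + ENNReal.ofReal δ :=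
        (measure_mono hUnionU).trans hUlt.le
      have := ENNReal.toReal_mono (by finiteness) hle2
      rwa [ENNReal.toReal_add hAne (by finiteness), ENNReal.toReal_ofReal hδ.le] at this
    calc (μ A).toReal ≤ r * (μ (⋃ q ∈ Q₀, C q)).toReal := h1.trans h3
      _ ≤ r * ((μ A).toReal + δ) := mul_le_mul_of_nonneg_left h4 hr0
  -- conclude
  have hfinal : (μ A).toReal ≤ r * (μ A).toReal := by
    refine le_of_forall_pos_le_add fun ε hε => ?_
    have hδ : 0 < ε / (r + 1) := div_pos hε (by linarith)
    have := key _ hδ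
    have hrr : r * (ε / (r + 1)) ≤ ε := by
      rw [mul_div_assoc']
      rw [div_le_iff₀ (by linarith)]
      nlinarith
    nlinarith
  nlinarith
end

section
/- Let G be a profinite group and A a closed subset with positive Haar measure m(A) > 0. Then m(A) = inf{ |AN/N| / |G/N| : N a normal open subgroup of G }, where AN/N denotes the image of A in the finite quotient G/N. -/
open MeasureTheory
open scoped ENNReal

section Aux

variable {G : Type*} [Group G] [TopologicalSpace G] [IsTopologicalGroup G] [CompactSpace G]
  [MeasurableSpace G] [BorelSpace G]

lemma aux_fiber_eq (N : Subgroup G) (g : G) :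
    (QuotientGroup.mk : G → G ⧸ N) ⁻¹' {(g : G ⧸ N)} = (fun x => g⁻¹ * x) ⁻¹' (N : Set G) := by
  ext x
  simp only [Set.mem_preimage, Set.mem_singleton_iff, SetLike.mem_coe]
  rw [eq_comm, QuotientGroup.eq]

lemma aux_fiber_measurable (N : Subgroup G) (hN : IsOpen (N : Set G)) (t : G ⧸ N) :
    MeasurableSet ((QuotientGroup.mk : G → G ⧸ N) ⁻¹' {t}) := by
  obtain ⟨g, rfl⟩ := QuotientGroup.mk_surjective t
  rw [aux_fiber_eq]
  exact hN.measurableSet.preimage (measurable_const_mul g⁻¹)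

lemma aux_fiber_measure (μ : Measure G) [μ.IsMulLeftInvariant] (N : Subgroup G) (t : G ⧸ N) :
    μ ((QuotientGroup.mk : G → G ⧸ N) ⁻¹' {t}) = μ (N : Set G) := by
  obtain ⟨g, rfl⟩ := QuotientGroup.mk_surjective t
  rw [aux_fiber_eq]
  exact measure_preimage_mul μ g⁻¹ _

lemma aux_preimage_measure (μ : Measure G) [μ.IsMulLeftInvariant] (N : Subgroup G)
    (hN : IsOpen (N : Set G)) (T : Set (G ⧸ N)) :
    μ ((QuotientGroup.mk : G → G ⧸ N) ⁻¹' T) = T.ncard * μ (N : Set G) := by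
  haveI : Finite (G ⧸ N) := N.quotient_finite_of_isOpen hN
  haveI : Fintype (G ⧸ N) := Fintype.ofFinite _
  haveI : Fintype T := Fintype.ofFinite _
  have hT : (QuotientGroup.mk : G → G ⧸ N) ⁻¹' T
      = ⋃ t ∈ T.toFinset, (QuotientGroup.mk : G → G ⧸ N) ⁻¹' {t} := by
    ext x; simp
  rw [hT, measure_biUnion_finset ?_ (fun t _ => aux_fiber_measurable N hN t)]
  · simp only [aux_fiber_measure]
    rw [Finset.sum_const, Set.ncard_eq_toFinset_card' T, nsmul_eq_mul]
  · intro i _ j _ hij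
    exact Set.disjoint_left.2 fun x hx hx' => hij (by
      simp only [Set.mem_preimage, Set.mem_singleton_iff] at hx hx'
      rw [← hx, ← hx'])

lemma aux_ratio (μ : Measure G) [μ.IsMulLeftInvariant] [IsProbabilityMeasure μ]
    (N : Subgroup G) (hN : IsOpen (N : Set G)) (T : Set (G ⧸ N)) :
    (μ ((QuotientGroup.mk : G → G ⧸ N) ⁻¹' T)).toReal
      = (T.ncard : ℝ) / Nat.card (G ⧸ N) := by
  haveI : Finite (G ⧸ N) := N.quotient_finite_of_isOpen hN
  have huniv : ((Nat.card (G ⧸ N) : ℝ≥0∞)) * μ (N : Set G) = 1 := by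
    have h := aux_preimage_measure μ N hN (Set.univ)
    rw [Set.preimage_univ, measure_univ, Set.ncard_univ] at h
    exact h.symm
  have hcard : (0 : ℝ) < (Nat.card (G ⧸ N) : ℝ) := by exact_mod_cast Nat.card_pos
  have hμN : (μ (N : Set G)).toReal = 1 / (Nat.card (G ⧸ N) : ℝ) := by
    have h1 : ((Nat.card (G ⧸ N) : ℝ≥0∞) * μ (N : Set G)).toReal = 1 := by
      rw [huniv]; simp
    rw [ENNReal.toReal_mul, ENNReal.toReal_natCast] at h1
    rw [eq_div_iff hcard.ne', mul_comm]
    exact h1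
  rw [aux_preimage_measure μ N hN, ENNReal.toReal_mul, ENNReal.toReal_natCast, hμN]
  ring

end Aux

/-- For a profinite group `G` with normalized Haar measure `μ` and a closed
subset `A` with `μ A > 0`, the measure `μ A` is the infimum over normal open subgroups
`N` of the ratios `|AN/N| / |G/N|`, where `AN/N` is the image of `A` in `G ⧸ N`. -/
theorem haar_closed_eq_sInf_quotient_ratio {G : Type*} [Group G] [TopologicalSpace G]
    [IsTopologicalGroup G] [CompactSpace G] [TotallyDisconnectedSpace G] [T2Space G]
    [MeasurableSpace G] [BorelSpace G]
    (μ : Measure G) [μ.IsHaarMeasure] [IsProbabilityMeasure μ]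
    (A : Set G) (hA : IsClosed A) (hApos : 0 < μ A) :
    (μ A).toReal = sInf {ρ : ℝ | ∃ N : Subgroup G, N.Normal ∧ IsOpen (N : Set G) ∧
        ρ = (((QuotientGroup.mk : G → G ⧸ N) '' A).ncard : ℝ) / Nat.card (G ⧸ N)} := by
  set S := {ρ : ℝ | ∃ N : Subgroup G, N.Normal ∧ IsOpen (N : Set G) ∧
      ρ = (((QuotientGroup.mk : G → G ⧸ N) '' A).ncard : ℝ) / Nat.card (G ⧸ N)} with hSdef
  have hbdd : ∀ ρ ∈ S, (μ A).toReal ≤ ρ := by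
    rintro ρ ⟨N, hNnorm, hNopen, rfl⟩
    rw [← aux_ratio μ N hNopen _]
    exact ENNReal.toReal_mono (measure_ne_top μ _)
      (measure_mono (Set.subset_preimage_image _ _))
  have hne : S.Nonempty := by
    refine ⟨_, ⊤, inferInstance, ?_, rfl⟩
    rw [Subgroup.coe_top]; exact isOpen_univ
  refine le_antisymm (le_csInf hne hbdd) ?_
  refine le_of_forall_pos_le_add fun ε hε => ?_
  -- find an open set U ⊇ A with μ U < μ A + ε
  obtain ⟨U, hAU, hUopen, hUlt⟩ := A.exists_isOpen_lt_of_lt _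
    (ENNReal.lt_add_right (measure_ne_top μ A) (ENNReal.ofReal_pos.2 hε).ne')
  -- for each a, an open normal subgroup H a with a • H a ⊆ U when a ∈ A
  have key : ∀ a : G, ∃ H : OpenNormalSubgroup G, a ∈ A → ∀ h ∈ H, a * h ∈ U := by
    intro a
    by_cases ha : a ∈ A
    · obtain ⟨C, hCclopen, hC1, hCW⟩ := compact_exists_isClopen_in_isOpen
        (hUopen.preimage (continuous_mul_left a)) (show (1:G) ∈ (fun x => a*x) ⁻¹' U by simp only [Set.mem_preimage, mul_one]; exact hAU ha)
      obtain ⟨H, hH⟩ :=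
        IsTopologicalGroup.exist_openNormalSubgroup_sub_clopen_nhds_of_one hCclopen hC1
      exact ⟨H, fun _ h hh => hCW (hH hh)⟩
    · exact ⟨⟨⊤, inferInstanceAs (⊤ : Subgroup G).Normal⟩, fun hmem => absurd hmem ha⟩
  choose H hH using key
  -- cover A by the open sets a • (H a)
  have hcov : A ⊆ ⋃ a ∈ A, (fun x => a⁻¹ * x) ⁻¹' ((H a : Set G)) := by
    intro a ha
    exact Set.mem_biUnion ha (by simp [one_mem])
  obtain ⟨t, htA, htfin, hcover⟩ := hA.isCompact.elim_finite_subcover_image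
    (fun a _ => (H a).isOpen.preimage (continuous_mul_left a⁻¹)) hcov
  -- t is nonempty since A is nonempty
  obtain ⟨a₀, ha₀⟩ : A.Nonempty := nonempty_of_measure_ne_zero hApos.ne'
  obtain ⟨a₁, ha₁t, -⟩ := Set.mem_iUnion₂.1 (hcover ha₀)
  have htne : htfin.toFinset.Nonempty := ⟨a₁, htfin.mem_toFinset.2 ha₁t⟩
  set Nn : OpenNormalSubgroup G := htfin.toFinset.inf' htne H with hNn
  set N : Subgroup G := Nn.toSubgroup with hN
  have hNle : ∀ a ∈ t, N ≤ (H a : Subgroup G) := by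
    intro a hat n hn
    have : Nn ≤ H a := Finset.inf'_le H (htfin.mem_toFinset.2 hat)
    exact this hn
  -- AN ⊆ U
  have hsub : (QuotientGroup.mk : G → G ⧸ N) ⁻¹' ((QuotientGroup.mk : G → G ⧸ N) '' A) ⊆ U := by
    intro x hx
    obtain ⟨a, ha, hax⟩ := hx
    have hn : a⁻¹ * x ∈ N := by
      rw [← QuotientGroup.eq]
      exact hax
    obtain ⟨a', ha't, ha'⟩ := Set.mem_iUnion₂.1 (hcover ha)
    have hmem : (a'⁻¹ * a) * (a⁻¹ * x) ∈ (H a' : Subgroup G) :=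
      mul_mem ha' (hNle a' ha't hn)
    have : a' * ((a'⁻¹ * a) * (a⁻¹ * x)) ∈ U := hH a' (htA ha't) _ hmem
    simpa [mul_assoc] using this
  -- conclude
  have hρS : (((QuotientGroup.mk : G → G ⧸ N) '' A).ncard : ℝ) / Nat.card (G ⧸ N) ∈ S :=
    ⟨N, Nn.isNormal', Nn.isOpen, rfl⟩
  refine le_trans (csInf_le ⟨(μ A).toReal, hbdd⟩ hρS) ?_
  rw [← aux_ratio μ N Nn.isOpen _]
  calc (μ ((QuotientGroup.mk : G → G ⧸ N) ⁻¹' ((QuotientGroup.mk : G → G ⧸ N) '' A))).toReal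
      ≤ (μ U).toReal := ENNReal.toReal_mono (measure_ne_top μ _) (measure_mono hsub)
    _ ≤ (μ A + ENNReal.ofReal ε).toReal := ENNReal.toReal_mono
        (by finiteness) hUlt.le
    _ = (μ A).toReal + ε := by
        rw [ENNReal.toReal_add (measure_ne_top μ A) ENNReal.ofReal_ne_top,
          ENNReal.toReal_ofReal hε.le]
end

section
/- Let 𝒳 be a class of finite groups and suppose c^𝒳_n < 1, where c^𝒳_n is the supremum of ratios |X_{n,φ}(H)|/|H| over H ∈ 𝒳 and automorphisms φ of H with φⁿ = id, excluding the value 1. Let G be a profinite group, M a normal open subgroup, and φ a continuous automorphism of M such that every normal open subgroup N of G contained in M is φ-invariant with M/N ∈ 𝒳. If X_{n,φ}(M) ≠ M, then m_M(X_{n,φ}(M)) ≤ c^𝒳_n. -/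
open MeasureTheory

/-- Let `𝒳` be a class of finite groups and `c < 1` an upper bound for all
ratios `|X_{n,φ}(H)| / |H|` (over `H ∈ 𝒳` and `φ ∈ Aut H` with `φ ^ n = 1`) which are
different from `1` (i.e. `c^𝒳_n ≤ c < 1`).  Let `G` be a profinite group, `M` a normal
open subgroup with normalized Haar measure `ν`, and `φ` a continuous automorphism of `M`
such that every normal open subgroup `N` of `G` contained in `M` is `φ`-invariant with
`M/N ∈ 𝒳`.  If `X_{n,φ}(M) ≠ M` then `ν (X_{n,φ}(M)) ≤ c`. -/
theorem haar_twisted_le_of_ne_univ (n : ℕ)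
    (𝒳 : ∀ (H : Type) [Group H], Prop) (c : ℝ) (hc : c < 1)
    (hub : ∀ (H : Type) [Group H] [Fintype H] (φ : MulAut H), 𝒳 H → φ ^ n = 1 →
      (Nat.card {x : H | ((List.range n).map fun i => (φ ^ i) x).prod = 1} : ℝ) /
          Nat.card H ≠ 1 →
      (Nat.card {x : H | ((List.range n).map fun i => (φ ^ i) x).prod = 1} : ℝ) /
          Nat.card H ≤ c)
    {G : Type} [Group G] [TopologicalSpace G] [IsTopologicalGroup G] [CompactSpace G]
    [TotallyDisconnectedSpace G] [T2Space G] [MeasurableSpace G] [BorelSpace G]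
    (M : Subgroup G) [M.Normal] (hM : IsOpen (M : Set G))
    (ν : Measure ↥M) [ν.IsMulLeftInvariant] [IsProbabilityMeasure ν]
    (φ : MulAut ↥M) (hcont : Continuous ⇑φ) (hφ : φ ^ n = 1)
    (hinv : ∀ N : Subgroup G, ∀ _ : N.Normal, IsOpen (N : Set G) → N ≤ M →
      ((∀ x : ↥M, (x : G) ∈ N → ((φ x : ↥M) : G) ∈ N) ∧
        𝒳 (↥M ⧸ N.subgroupOf M)))
    (hne : {x : ↥M | ((List.range n).map fun i => (φ ^ i) x).prod = 1} ≠ Set.univ) :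
    (ν {x : ↥M | ((List.range n).map fun i => (φ ^ i) x).prod = 1}).toReal ≤ c := by
  by_cases hn0 : n = 0
  · exact absurd (by ext x; simp [hn0]) hne
  have hn : 0 < n := Nat.pos_of_ne_zero hn0
  set X := {x : ↥M | ((List.range n).map fun i => (φ ^ i) x).prod = 1} with hXdef
  obtain ⟨x₀, hx₀⟩ := (Set.ne_univ_iff_exists_notMem _).mp hne
  set g : ↥M := ((List.range n).map fun i => (φ ^ i) x₀).prod with hg
  have hg1 : g ≠ 1 := hx₀
  have hgG : (1 : G) ≠ (g : G) := by
    intro h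
    exact hg1 (Subtype.ext h.symm)
  obtain ⟨W, hW, h1W, hgW⟩ := exists_isClopen_of_totally_separated hgG
  obtain ⟨H, hH⟩ := IsTopologicalGroup.exist_openNormalSubgroup_sub_clopen_nhds_of_one hW h1W
  set N : Subgroup G := H.toSubgroup ⊓ M with hNdef
  haveI hNnorm : N.Normal := inferInstance
  have hNopen : IsOpen (N : Set G) := by
    have : (N : Set G) = (H : Set G) ∩ (M : Set G) := rfl
    rw [this]; exact H.isOpen.inter hM
  have hNle : N ≤ M := inf_le_right
  obtain ⟨hφN, hXQ⟩ := hinv N hNnorm hNopen hNle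
  set K : Subgroup ↥M := N.subgroupOf M with hKdef
  haveI : K.Normal := hNnorm.comap M.subtype
  have hKopen : IsOpen (K : Set ↥M) := by
    have : (K : Set ↥M) = (Subtype.val : ↥M → G) ⁻¹' (N : Set G) := rfl
    rw [this]; exact hNopen.preimage continuous_subtype_val
  haveI : CompactSpace ↥M :=
    isCompact_iff_compactSpace.mp ((Subgroup.isClosed_of_isOpen M hM).isCompact)
  haveI : Finite (↥M ⧸ K) := Subgroup.quotient_finite_of_isOpen K hKopen
  haveI : Fintype (↥M ⧸ K) := Fintype.ofFinite _
  -- invariance of K under φ and φ⁻¹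
  have hKinv : ∀ m : ↥M, m ∈ K → φ m ∈ K := by
    intro m hm
    rw [Subgroup.mem_subgroupOf] at hm ⊢
    exact hφN m hm
  have hKpow : ∀ (i : ℕ) (m : ↥M), m ∈ K → (φ ^ i) m ∈ K := by
    intro i
    induction i with
    | zero => intro m hm; simpa using hm
    | succ i ih =>
      intro m hm
      rw [pow_succ', MulAut.mul_apply]
      exact hKinv _ (ih m hm)
  have hinvpow : (φ⁻¹ : MulAut ↥M) = φ ^ (n - 1) := by
    have h1 : φ ^ (n - 1) * φ = 1 := by
      rw [← pow_succ, Nat.sub_add_cancel hn, hφ]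
    exact (eq_inv_of_mul_eq_one_left h1).symm
  have hKinv' : ∀ m : ↥M, m ∈ K → (φ⁻¹ : MulAut ↥M) m ∈ K := by
    intro m hm
    rw [hinvpow]
    exact hKpow _ m hm
  have hle : K ≤ K.comap φ.toMonoidHom := fun m hm => hKinv m hm
  have hle' : K ≤ K.comap (φ⁻¹ : MulAut ↥M).toMonoidHom := fun m hm => hKinv' m hm
  set f := QuotientGroup.map K K φ.toMonoidHom hle with hf
  set f' := QuotientGroup.map K K (φ⁻¹ : MulAut ↥M).toMonoidHom hle' with hf'
  have hff' : f'.comp f = MonoidHom.id _ := by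
    ext x
    simp [hf, hf', QuotientGroup.map_mk]
  have hf'f : f.comp f' = MonoidHom.id _ := by
    ext x
    simp [hf, hf', QuotientGroup.map_mk]
  set ψ : MulAut (↥M ⧸ K) := MonoidHom.toMulEquiv f f' hff' hf'f with hψ
  have hψmk : ∀ x : ↥M, ψ (↑x) = ((φ x : ↥M) : ↥M ⧸ K) := by
    intro x
    simp [hψ, hf, QuotientGroup.map_mk]
  have key : ∀ (i : ℕ) (x : ↥M), (ψ ^ i) ((x : ↥M ⧸ K)) = (((φ ^ i) x : ↥M) : ↥M ⧸ K) := by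
    intro i
    induction i with
    | zero => intro x; simp
    | succ i ih =>
      intro x
      rw [pow_succ, pow_succ, MulAut.mul_apply, MulAut.mul_apply, hψmk, ih]
  have hψn : ψ ^ n = 1 := by
    ext q
    refine QuotientGroup.induction_on q ?_
    intro x
    rw [key, hφ]
    simp
  set S' := {q : ↥M ⧸ K | ((List.range n).map fun i => (ψ ^ i) q).prod = 1} with hS'
  have hprod : ∀ x : ↥M,
      ((List.range n).map fun i => (ψ ^ i) ((x : ↥M ⧸ K))).prod
        = ((((List.range n).map fun i => (φ ^ i) x).prod : ↥M) : ↥M ⧸ K) := by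
    intro x
    have h1 : ((List.range n).map fun i => (ψ ^ i) ((x : ↥M ⧸ K)))
        = ((List.range n).map fun i => (φ ^ i) x).map (QuotientGroup.mk' K) := by
      rw [List.map_map]
      refine List.map_congr_left ?_
      intro i _
      simpa using key i x
    rw [h1, ← MonoidHom.map_list_prod]
    rfl
  -- x₀'s image is not in S'
  have hgK : g ∉ K := by
    rw [Subgroup.mem_subgroupOf]
    intro hgN
    exact hgW (hH hgN.1)
  have hx₀S' : ((x₀ : ↥M ⧸ K)) ∉ S' := by
    intro hmem
    rw [hS', Set.mem_setOf_eq, hprod] at hmem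
    exact hgK ((QuotientGroup.eq_one_iff _).mp hmem)
  have hS'ne : S' ≠ Set.univ := by
    intro h
    exact hx₀S' (h ▸ Set.mem_univ _)
  -- cardinality bound
  have hQpos : 0 < Nat.card (↥M ⧸ K) := Nat.card_pos
  have hlt : Nat.card ↥S' < Nat.card (↥M ⧸ K) := by
    rw [Nat.card_coe_set_eq, ← Set.ncard_univ (↥M ⧸ K)]
    exact Set.ncard_lt_ncard (Set.ssubset_univ_iff.mpr hS'ne) Set.finite_univ
  have hratio : (Nat.card ↥S' : ℝ) / Nat.card (↥M ⧸ K) < 1 := by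
    rw [div_lt_one (by exact_mod_cast hQpos)]
    exact_mod_cast hlt
  have hc' : (Nat.card ↥S' : ℝ) / Nat.card (↥M ⧸ K) ≤ c :=
    hub (↥M ⧸ K) ψ hXQ hψn (ne_of_lt hratio)
  -- measure theory
  haveI : BorelSpace ↥M := Subtype.borelSpace (M : Set G)
  have hfibereq : ∀ x : ↥M,
      ((QuotientGroup.mk : ↥M → ↥M ⧸ K) ⁻¹' {(x : ↥M ⧸ K)})
        = (fun y => x⁻¹ * y) ⁻¹' (K : Set ↥M) := by
    intro x
    ext y
    simp only [Set.mem_preimage, Set.mem_singleton_iff, SetLike.mem_coe]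
    rw [eq_comm, QuotientGroup.eq]
  have hfiber : ∀ q : ↥M ⧸ K, ν ((QuotientGroup.mk : ↥M → ↥M ⧸ K) ⁻¹' {q}) = ν (K : Set ↥M) := by
    intro q
    obtain ⟨x, rfl⟩ := QuotientGroup.mk_surjective q
    rw [hfibereq x]
    exact measure_preimage_mul ν _ _
  have hfibermeas' : ∀ q : ↥M ⧸ K,
      MeasurableSet ((QuotientGroup.mk : ↥M → ↥M ⧸ K) ⁻¹' {q}) := by
    intro q
    obtain ⟨x, rfl⟩ := QuotientGroup.mk_surjective q
    rw [hfibereq x]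
    exact (hKopen.preimage (continuous_mul_left _)).measurableSet
  have hcount : ∀ T : Set (↥M ⧸ K),
      ν ((QuotientGroup.mk : ↥M → ↥M ⧸ K) ⁻¹' T) = T.ncard * ν (K : Set ↥M) := by
    intro T
    have hTfin : T.Finite := Set.toFinite T
    have hsplit : (QuotientGroup.mk : ↥M → ↥M ⧸ K) ⁻¹' T
        = ⋃ q ∈ hTfin.toFinset, (QuotientGroup.mk : ↥M → ↥M ⧸ K) ⁻¹' {q} := by
      ext x
      simp
    have hdisj : (↑hTfin.toFinset : Set (↥M ⧸ K)).PairwiseDisjoint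
        (fun q => (QuotientGroup.mk : ↥M → ↥M ⧸ K) ⁻¹' {q}) := by
      intro q _ q' _ hqq'
      exact (Set.disjoint_singleton.mpr hqq').preimage _
    rw [hsplit, measure_biUnion_finset hdisj (fun q _ => hfibermeas' q),
      Finset.sum_congr rfl (fun q _ => hfiber q), Finset.sum_const, nsmul_eq_mul,
      Set.ncard_eq_toFinset_card T hTfin]
  -- totals
  have hKfin : ν (K : Set ↥M) ≠ ⊤ := measure_ne_top ν _
  have htotal : (1 : ENNReal) = (Nat.card (↥M ⧸ K) : ENNReal) * ν (K : Set ↥M) := by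
    have := hcount Set.univ
    rw [Set.preimage_univ, measure_univ, Set.ncard_univ] at this
    exact this
  have hsub : X ⊆ (QuotientGroup.mk : ↥M → ↥M ⧸ K) ⁻¹' S' := by
    intro x hx
    rw [Set.mem_preimage, hS', Set.mem_setOf_eq, hprod, hx]
    simp
  have hXbound : ν X ≤ (Nat.card ↥S' : ENNReal) * ν (K : Set ↥M) := by
    calc ν X ≤ ν ((QuotientGroup.mk : ↥M → ↥M ⧸ K) ⁻¹' S') := measure_mono hsub
      _ = (S'.ncard : ENNReal) * ν (K : Set ↥M) := hcount S'
      _ = (Nat.card ↥S' : ENNReal) * ν (K : Set ↥M) := by rw [Nat.card_coe_set_eq]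
  -- pass to real numbers
  set a : ℝ := (ν (K : Set ↥M)).toReal with ha
  have htotalR : (1 : ℝ) = (Nat.card (↥M ⧸ K) : ℝ) * a := by
    have := congrArg ENNReal.toReal htotal
    rwa [ENNReal.toReal_one, ENNReal.toReal_mul, ENNReal.toReal_natCast] at this
  have haval : a = 1 / (Nat.card (↥M ⧸ K) : ℝ) := by
    field_simp at htotalR ⊢
    linarith [htotalR]
  have hXR : (ν X).toReal ≤ (Nat.card ↥S' : ℝ) * a := by
    have h1 : ((Nat.card ↥S' : ENNReal) * ν (K : Set ↥M)).toReal
        = (Nat.card ↥S' : ℝ) * a := by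
      rw [ENNReal.toReal_mul, ENNReal.toReal_natCast]
    rw [← h1]
    exact ENNReal.toReal_mono (by finiteness) hXbound
  calc (ν X).toReal ≤ (Nat.card ↥S' : ℝ) * a := hXR
    _ = (Nat.card ↥S' : ℝ) / Nat.card (↥M ⧸ K) := by rw [haval]; ring
    _ ≤ c := hc'
end

section
/- Suppose c_n < 1, where c_n = sup({|X_{n,φ}(H)|/|H| : H finite, φ ∈ Aut(H), φⁿ = id} \ {1}). Then every profinite group G in which the set X_n(G) of solutions of xⁿ = 1 has positive Haar measure contains a normal open subgroup M and an element g such that every element of the coset Mg has order dividing n. -/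
open MeasureTheory Pointwise ENNReal

private lemma telescope_pow {G : Type} [Group G] (x m : G) : ∀ k : ℕ,
    ((List.range k).map (fun i => x ^ i * m * (x ^ i)⁻¹)).prod * x ^ k = (m * x) ^ k
  | 0 => by simp
  | (k + 1) => by
    rw [List.range_succ, List.map_append, List.prod_append, pow_succ (m * x) k,
      ← telescope_pow x m k]
    simp only [List.map_cons, List.map_nil, List.prod_cons, List.prod_nil, mul_one]
    group

private lemma conj_pow_eq {G : Type} [Group G] (a b : G) : ∀ k : ℕ,
    (a * b) ^ k = b⁻¹ * (b * a) ^ k * b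
  | 0 => by group
  | (k + 1) => by rw [pow_succ, conj_pow_eq a b k, pow_succ]; group

private lemma measure_smul_set' {G : Type} [Group G] [TopologicalSpace G]
    [IsTopologicalGroup G] [MeasurableSpace G] [BorelSpace G]
    (μ : Measure G) [μ.IsMulLeftInvariant] (g : G) (s : Set G) : μ (g • s) = μ s := by
  have h : g • s = (fun x => g⁻¹ * x) ⁻¹' s := by
    ext x
    simp [Set.mem_smul_set_iff_inv_smul_mem, smul_eq_mul]
  rw [h, measure_preimage_mul]

private lemma measure_biUnion_smul_coset {G : Type} [Group G] [TopologicalSpace G]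
    [IsTopologicalGroup G] [MeasurableSpace G] [BorelSpace G] (μ : Measure G)
    [μ.IsMulLeftInvariant] (M : Subgroup G) (hM : IsOpen (M : Set G))
    {ι : Type} (s : Finset ι) (f : ι → G)
    (hinj : ∀ i ∈ s, ∀ j ∈ s, (f i)⁻¹ * f j ∈ M → i = j) :
    μ (⋃ i ∈ s, f i • (M : Set G)) = s.card * μ (M : Set G) := by
  rw [measure_biUnion_finset ?disj (fun i _ => (hM.smul (f i)).measurableSet)]
  · rw [Finset.sum_congr rfl (fun i _ => measure_smul_set' μ (f i) (M : Set G)),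
      Finset.sum_const, nsmul_eq_mul]
  case disj =>
    intro i hi j hj hij
    rw [Function.onFun, Set.disjoint_left]
    intro x hxi hxj
    rw [mem_leftCoset_iff] at hxi hxj
    refine hij (hinj i hi j hj ?_)
    have := mul_mem hxi (inv_mem hxj)
    rwa [show (f i)⁻¹ * x * ((f j)⁻¹ * x)⁻¹ = (f i)⁻¹ * f j by group] at this

private lemma exists_mulAut {G : Type} [Group G] (n : ℕ) (N M : Subgroup G)
    (hN : N.Normal) (hM : M.Normal) (hMN : M ≤ N) (x₀ : G) (hx₀ : x₀ ^ n = 1) :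
    ∃ φ : MulAut (N ⧸ M.subgroupOf N), φ ^ n = 1 ∧
      ∀ w : N, (((List.range n).map fun i =>
          (φ ^ i) ((QuotientGroup.mk w : N ⧸ M.subgroupOf N))).prod = 1 ↔
        ((w : G) * x₀) ^ n ∈ M) := by
  classical
  let c : G → N →* N := fun g =>
    { toFun := fun m => ⟨g * m * g⁻¹, hN.conj_mem m m.2 g⟩
      map_one' := by ext; simp
      map_mul' := fun a b => by ext; show g * ((a : G) * b) * g⁻¹ = (g * a * g⁻¹) * (g * b * g⁻¹); group }
  have hc_coe : ∀ g (m : N), ((c g m : N) : G) = g * m * g⁻¹ := fun g m => rfl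
  have hcomp : ∀ g₁ g₂ (m : N), c g₁ (c g₂ m) = c (g₁ * g₂) m := by
    intro g₁ g₂ m
    ext
    simp only [hc_coe]
    group
  have hcone : ∀ m : N, c 1 m = m := by
    intro m; ext; simp [hc_coe]
  have hker : ∀ g, M.subgroupOf N ≤ ((QuotientGroup.mk' (M.subgroupOf N)).comp (c g)).ker := by
    intro g m hm
    rw [MonoidHom.mem_ker, MonoidHom.comp_apply, QuotientGroup.mk'_apply,
      QuotientGroup.eq_one_iff]
    rw [Subgroup.mem_subgroupOf] at hm ⊢
    rw [hc_coe]
    exact hM.conj_mem _ hm g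
  let φ₀ : G → (N ⧸ M.subgroupOf N) →* (N ⧸ M.subgroupOf N) := fun g =>
    QuotientGroup.lift _ ((QuotientGroup.mk' (M.subgroupOf N)).comp (c g)) (hker g)
  have hφ₀_mk : ∀ g (m : N), φ₀ g (QuotientGroup.mk m) = QuotientGroup.mk (c g m) :=
    fun g m => rfl
  let φ : MulAut (N ⧸ M.subgroupOf N) :=
    { toFun := φ₀ x₀
      invFun := φ₀ x₀⁻¹
      left_inv := fun q => QuotientGroup.induction_on q fun m => by
        rw [hφ₀_mk, hφ₀_mk, hcomp, inv_mul_cancel, hcone]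
      right_inv := fun q => QuotientGroup.induction_on q fun m => by
        rw [hφ₀_mk, hφ₀_mk, hcomp, mul_inv_cancel, hcone]
      map_mul' := (φ₀ x₀).map_mul }
  have hφ_apply : ∀ m : N, φ (QuotientGroup.mk m) = QuotientGroup.mk (c x₀ m) := fun m => rfl
  have hpow : ∀ (i : ℕ) (m : N),
      (φ ^ i) (QuotientGroup.mk m) = QuotientGroup.mk (c (x₀ ^ i) m) := by
    intro i
    induction i with
    | zero => intro m; rw [pow_zero, pow_zero]; rw [hcone]; rfl
    | succ i ih =>
      intro m
      rw [pow_succ', MulAut.mul_apply, ih, hφ_apply, hcomp, ← pow_succ']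
  have hφn : φ ^ n = 1 := by
    ext q
    refine QuotientGroup.induction_on q fun m => ?_
    rw [hpow n m, hx₀, hcone]
    rfl
  refine ⟨φ, hφn, fun w => ?_⟩
  have hlist : ((List.range n).map fun i => (φ ^ i) (QuotientGroup.mk w)).prod
      = QuotientGroup.mk (((List.range n).map fun i => c (x₀ ^ i) w).prod) := by
    have h1 : ((List.range n).map fun i => (φ ^ i) (QuotientGroup.mk w))
        = ((List.range n).map fun i => c (x₀ ^ i) w).map
            (QuotientGroup.mk' (M.subgroupOf N)) := by
      rw [List.map_map]
      exact List.map_congr_left fun i _ => hpow i w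
    rw [h1, ← map_list_prod]
    rfl
  rw [hlist, QuotientGroup.eq_one_iff, Subgroup.mem_subgroupOf]
  have hPcoe : ((((List.range n).map fun i => c (x₀ ^ i) w).prod : N) : G)
      = ((List.range n).map fun i => x₀ ^ i * (w : G) * (x₀ ^ i)⁻¹).prod := by
    rw [show ((((List.range n).map fun i => c (x₀ ^ i) w).prod : N) : G)
        = N.subtype (((List.range n).map fun i => c (x₀ ^ i) w).prod) from rfl,
      map_list_prod, List.map_map]
    rfl
  rw [hPcoe]
  have ht := telescope_pow x₀ (w : G) n
  rw [hx₀, mul_one] at ht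
  rw [ht]

private lemma measure_image_preimage {G : Type} [Group G] [TopologicalSpace G]
    [IsTopologicalGroup G] [MeasurableSpace G] [BorelSpace G] (μ : Measure G)
    [μ.IsMulLeftInvariant] (N M : Subgroup G) (hMN : M ≤ N) (hMopen : IsOpen (M : Set G))
    [Fintype (N ⧸ M.subgroupOf N)] (Y : Set (N ⧸ M.subgroupOf N)) :
    μ (Subtype.val '' ((QuotientGroup.mk : N → N ⧸ M.subgroupOf N) ⁻¹' Y))
      = Nat.card Y * μ (M : Set G) := by
  classical
  set s : Finset (N ⧸ M.subgroupOf N) := Finset.univ.filter (· ∈ Y) with hs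
  have hset : Subtype.val '' ((QuotientGroup.mk : N → N ⧸ M.subgroupOf N) ⁻¹' Y)
      = ⋃ h ∈ s, ((h.out : N) : G) • (M : Set G) := by
    ext x
    simp only [Set.mem_image, Set.mem_preimage, Set.mem_iUnion, exists_prop]
    constructor
    · rintro ⟨w, hwY, rfl⟩
      refine ⟨QuotientGroup.mk w, by simp [hs, hwY], ?_⟩
      rw [mem_leftCoset_iff]
      have hmk : (QuotientGroup.mk ((QuotientGroup.mk w : N ⧸ M.subgroupOf N).out) :
          N ⧸ M.subgroupOf N) = QuotientGroup.mk w := QuotientGroup.out_eq' _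
      rw [QuotientGroup.eq] at hmk
      rw [Subgroup.mem_subgroupOf] at hmk
      simpa using hmk
    · rintro ⟨h, hhs, hx⟩
      rw [mem_leftCoset_iff] at hx
      have hxN : x ∈ N := by
        have h1 : ((h.out : N) : G) ∈ N := (h.out : N).2
        have h2 : ((h.out : N) : G)⁻¹ * x ∈ N := hMN hx
        have := mul_mem h1 h2
        rwa [mul_inv_cancel_left] at this
      refine ⟨⟨x, hxN⟩, ?_, rfl⟩
      have hmk : (QuotientGroup.mk h.out : N ⧸ M.subgroupOf N) = QuotientGroup.mk ⟨x, hxN⟩ := by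
        rw [QuotientGroup.eq, Subgroup.mem_subgroupOf]
        simpa using hx
      rw [← hmk, QuotientGroup.out_eq']
      simpa [hs] using hhs
  rw [hset, measure_biUnion_smul_coset μ M hMopen s (fun h => ((h.out : N) : G)) ?inj]
  · congr 1
    rw [Nat.card_eq_fintype_card, Fintype.card_subtype]
  case inj =>
    intro h₁ h₁s h₂ h₂s hmem
    have : (QuotientGroup.mk h₁.out : N ⧸ M.subgroupOf N) = QuotientGroup.mk h₂.out := by
      rw [QuotientGroup.eq, Subgroup.mem_subgroupOf]
      simpa using hmem
    rwa [QuotientGroup.out_eq', QuotientGroup.out_eq'] at this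

/-- Suppose `c < 1` is an upper bound for all the ratios
`|X_{n,φ}(H)| / |H|` (over finite groups `H` and `φ ∈ Aut H` with `φ ^ n = 1`) different
from `1` (i.e. `c_n ≤ c < 1`).  Then every profinite group `G` in which the solution set
of `x ^ n = 1` has positive Haar measure contains a normal open subgroup `M` and an
element `g` such that every element of the coset `M g` has order dividing `n`. -/
theorem coset_of_exponent_of_haar_pos (n : ℕ) (c : ℝ) (hc : c < 1)
    (hub : ∀ (H : Type) [Group H] [Fintype H] (φ : MulAut H), φ ^ n = 1 →
      (Nat.card {x : H | ((List.range n).map fun i => (φ ^ i) x).prod = 1} : ℝ) /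
          Nat.card H ≠ 1 →
      (Nat.card {x : H | ((List.range n).map fun i => (φ ^ i) x).prod = 1} : ℝ) /
          Nat.card H ≤ c)
    {G : Type} [Group G] [TopologicalSpace G] [IsTopologicalGroup G] [CompactSpace G]
    [TotallyDisconnectedSpace G] [T2Space G] [MeasurableSpace G] [BorelSpace G]
    (μ : Measure G) [μ.IsHaarMeasure] [IsProbabilityMeasure μ]
    (hpos : 0 < μ {x : G | x ^ n = 1}) :
    ∃ (M : Subgroup G) (g : G), M.Normal ∧ IsOpen (M : Set G) ∧
      ∀ y ∈ (M : Set G) * {g}, y ^ n = 1 := by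
  classical
  set X := {x : G | x ^ n = 1} with hXdef
  have hXclosed : IsClosed X := isClosed_eq (continuous_pow n) continuous_const
  set c' : ℝ := max c (1 / 2) with hc'def
  have hc'0 : 0 < c' := lt_max_of_lt_right (by norm_num)
  have hc'1 : c' < 1 := max_lt hc (by norm_num)
  set c'' : ℝ≥0∞ := ENNReal.ofReal c' with hc''def
  have hc''0 : c'' ≠ 0 := (ENNReal.ofReal_pos.mpr hc'0).ne'
  have hc''top : c'' ≠ ⊤ := ENNReal.ofReal_ne_top
  have hc''1 : c'' < 1 := by
    rw [hc''def, ← ENNReal.ofReal_one]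
    exact (ENNReal.ofReal_lt_ofReal_iff one_pos).mpr hc'1
  have hμX_ne_top : μ X ≠ ⊤ := measure_ne_top μ X
  -- outer regularity
  have h1 : μ X < c''⁻¹ * μ X := by
    conv_lhs => rw [← one_mul (μ X)]
    exact ENNReal.mul_lt_mul_left hpos.ne' hμX_ne_top (ENNReal.one_lt_inv.mpr hc''1)
  obtain ⟨U, hXU, hUopen, hUlt⟩ := X.exists_isOpen_lt_of_lt _ h1
  obtain ⟨V, hV1, hXV⟩ := compact_open_separated_mul_right hXclosed.isCompact hUopen hXU
  obtain ⟨O, hOV, hOopen, hO1⟩ := mem_nhds_iff.mp hV1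
  obtain ⟨W, hWclopen, hW1, hWO⟩ := compact_exists_isClopen_in_isOpen hOopen hO1
  obtain ⟨N', hN'W⟩ :=
    IsTopologicalGroup.exist_openNormalSubgroup_sub_clopen_nhds_of_one hWclopen hW1
  set N : Subgroup G := N'.toOpenSubgroup.toSubgroup with hNdef
  have hNopen : IsOpen (N : Set G) := N'.toOpenSubgroup.isOpen
  have hNnormal : N.Normal := N'.isNormal'
  have hXNU : X * (N : Set G) ⊆ U :=
    le_trans (Set.mul_subset_mul_left (le_trans hN'W (le_trans hWO hOV))) hXV
  have hNfin : Finite (G ⧸ N) := N.quotient_finite_of_isOpen hNopen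
  have hNfintype : Fintype (G ⧸ N) := Fintype.ofFinite _
  have hμN0 : μ (N : Set G) ≠ 0 := (hNopen.measure_ne_zero μ ⟨1, N.one_mem⟩)
  have hμNtop : μ (N : Set G) ≠ ⊤ := measure_ne_top μ _
  set cosetSet : (G ⧸ N) → Set G := fun q => (QuotientGroup.mk : G → G ⧸ N) ⁻¹' {q}
    with hcosetdef
  have hcoset_eq : ∀ (x : G), cosetSet (QuotientGroup.mk x) = x • (N : Set G) := by
    intro x
    ext y
    simp only [hcosetdef, Set.mem_preimage, Set.mem_singleton_iff, mem_leftCoset_iff]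
    rw [eq_comm, QuotientGroup.eq]
    rfl
  have hcoset_out : ∀ q : G ⧸ N, cosetSet q = q.out • (N : Set G) := by
    intro q
    conv_lhs => rw [← QuotientGroup.out_eq' q]
    exact hcoset_eq q.out
  have hμcoset : ∀ q : G ⧸ N, μ (cosetSet q) = μ (N : Set G) := by
    intro q
    rw [hcoset_out q, measure_smul_set']
  -- find a good coset
  have hexists : ∃ q : G ⧸ N, c'' * μ (N : Set G) < μ (X ∩ cosetSet q) := by
    by_contra hcon
    push_neg at hcon
    set Q : Finset (G ⧸ N) := Finset.univ.filter fun q => (X ∩ cosetSet q).Nonempty with hQdef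
    have hXsub : X ⊆ ⋃ q ∈ Q, (X ∩ cosetSet q) := by
      intro x hx
      have hx' : x ∈ X ∩ cosetSet (QuotientGroup.mk x) := ⟨hx, rfl⟩
      exact Set.mem_biUnion (Finset.mem_filter.mpr ⟨Finset.mem_univ _, ⟨x, hx'⟩⟩) hx'
    have h2 : μ X ≤ Q.card * (c'' * μ (N : Set G)) := by
      refine le_trans (measure_mono hXsub) (le_trans (measure_biUnion_finset_le Q _) ?_)
      calc ∑ q ∈ Q, μ (X ∩ cosetSet q) ≤ ∑ _q ∈ Q, c'' * μ (N : Set G) :=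
            Finset.sum_le_sum fun q _ => hcon q
        _ = Q.card * (c'' * μ (N : Set G)) := by rw [Finset.sum_const, nsmul_eq_mul]
    have h3 : μ (⋃ q ∈ Q, cosetSet q) = Q.card * μ (N : Set G) := by
      have : (⋃ q ∈ Q, cosetSet q) = ⋃ q ∈ Q, q.out • (N : Set G) := by
        refine Set.iUnion₂_congr fun q _ => hcoset_out q
      rw [this]
      refine measure_biUnion_smul_coset μ N hNopen Q (fun q => q.out) ?_
      intro q₁ _ q₂ _ hmem
      have : (QuotientGroup.mk q₁.out : G ⧸ N) = QuotientGroup.mk q₂.out :=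
        (QuotientGroup.eq).mpr hmem
      rwa [QuotientGroup.out_eq', QuotientGroup.out_eq'] at this
    have hQU : (⋃ q ∈ Q, cosetSet q) ⊆ U := by
      intro x hx
      rw [Set.mem_iUnion₂] at hx
      obtain ⟨q, hq, hxq⟩ := hx
      rw [hQdef, Finset.mem_filter] at hq
      obtain ⟨x₁, hx₁X, hx₁q⟩ := hq.2
      refine hXNU ?_
      have : x₁⁻¹ * x ∈ N := by
        have h4 : (QuotientGroup.mk x₁ : G ⧸ N) = q := hx₁q
        have h5 : (QuotientGroup.mk x : G ⧸ N) = q := hxq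
        rw [← QuotientGroup.eq]
        rw [h4, h5]
      exact ⟨x₁, hx₁X, x₁⁻¹ * x, this, by group⟩
    have h6 : μ X < μ X := by
      calc μ X ≤ Q.card * (c'' * μ (N : Set G)) := h2
        _ = c'' * (Q.card * μ (N : Set G)) := by ring
        _ = c'' * μ (⋃ q ∈ Q, cosetSet q) := by rw [h3]
        _ ≤ c'' * μ U := by
            exact mul_le_mul_right (measure_mono hQU) c''
        _ < c'' * (c''⁻¹ * μ X) := ENNReal.mul_lt_mul_right hc''0 hc''top hUlt
        _ = μ X := by rw [← mul_assoc, ENNReal.mul_inv_cancel hc''0 hc''top, one_mul]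
    exact lt_irrefl _ h6
  obtain ⟨q, hq⟩ := hexists
  have hqpos : μ (X ∩ cosetSet q) ≠ 0 := by
    intro h0
    rw [h0] at hq
    exact absurd hq (by simp)
  obtain ⟨x₀, hx₀X, hx₀q⟩ := nonempty_of_measure_ne_zero hqpos
  have hx₀n : x₀ ^ n = 1 := hx₀X
  have hqx₀ : cosetSet q = x₀ • (N : Set G) := by
    have : q = QuotientGroup.mk x₀ := hx₀q.symm
    rw [this, hcoset_eq]
  refine ⟨N, x₀, hNnormal, hNopen, ?_⟩
  rintro y hy
  rw [Set.mem_mul] at hy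
  obtain ⟨w, hw, g', hg', rfl⟩ := hy
  rw [Set.mem_singleton_iff] at hg'
  rw [hg']
  -- goal : (w * x₀) ^ n = 1
  by_contra hz
  have h1z : (1 : G) ∈ ({(w * x₀) ^ n}ᶜ : Set G) := by simpa using (Ne.symm hz)
  obtain ⟨W', hW'clopen, hW'1, hW'z⟩ :=
    compact_exists_isClopen_in_isOpen isOpen_compl_singleton h1z
  obtain ⟨M₀', hM₀W'⟩ :=
    IsTopologicalGroup.exist_openNormalSubgroup_sub_clopen_nhds_of_one hW'clopen hW'1
  set M : Subgroup G := M₀'.toOpenSubgroup.toSubgroup ⊓ N with hMdef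
  have hMopen : IsOpen (M : Set G) := by
    rw [hMdef]
    exact (M₀'.toOpenSubgroup.isOpen).inter hNopen
  have hMnormal : M.Normal := by
    constructor
    intro x hx g
    rw [hMdef, Subgroup.mem_inf] at hx ⊢
    exact ⟨M₀'.isNormal'.conj_mem x hx.1 g, hNnormal.conj_mem x hx.2 g⟩
  have hMN : M ≤ N := inf_le_right
  have hzM : (w * x₀) ^ n ∉ M := by
    intro hzM
    have : (w * x₀) ^ n ∈ ({(w * x₀) ^ n}ᶜ : Set G) := hW'z (hM₀W' (hMdef ▸ hzM).1)
    simp at this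
  have hμM0 : μ (M : Set G) ≠ 0 := hMopen.measure_ne_zero μ ⟨1, M.one_mem⟩
  have hμMtop : μ (M : Set G) ≠ ⊤ := measure_ne_top μ _
  -- the finite quotient
  have hQopen : IsOpen ((M.subgroupOf N : Subgroup N) : Set N) := by
    have : ((M.subgroupOf N : Subgroup N) : Set N) = Subtype.val ⁻¹' (M : Set G) := by
      ext m
      simp [Subgroup.mem_subgroupOf]
    rw [this]
    exact hMopen.preimage continuous_subtype_val
  have hHfin : Finite (N ⧸ M.subgroupOf N) :=
    Subgroup.quotient_finite_of_isOpen' N (M.subgroupOf N) hNopen hQopen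
  have hHfintype : Fintype (N ⧸ M.subgroupOf N) := Fintype.ofFinite _
  obtain ⟨φ, hφn, hkey⟩ := exists_mulAut n N M hNnormal hMnormal hMN x₀ hx₀n
  set H := N ⧸ M.subgroupOf N with hHdef
  set Y : Set H := {x : H | ((List.range n).map fun i => (φ ^ i) x).prod = 1} with hYdef
  -- measure comparison
  have hμT : μ (Subtype.val '' ((QuotientGroup.mk : N → H) ⁻¹' Y))
      = Nat.card Y * μ (M : Set G) := measure_image_preimage μ N M hMN hMopen Y
  have hμN_eq : μ (N : Set G) = Nat.card H * μ (M : Set G) := by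
    have h7 := measure_image_preimage μ N M hMN hMopen (Set.univ : Set H)
    rw [Set.preimage_univ, Set.image_univ, Subtype.range_coe] at h7
    rw [h7]
    congr 1
    rw [Nat.card_coe_set_eq, Set.ncard_univ]
  have hsub : x₀⁻¹ • (X ∩ cosetSet q) ⊆ Subtype.val '' ((QuotientGroup.mk : N → H) ⁻¹' Y) := by
    rintro v ⟨y, hy, rfl⟩
    rw [hqx₀] at hy
    obtain ⟨hyX, hyN⟩ := hy
    rw [mem_leftCoset_iff] at hyN
    refine ⟨⟨x₀⁻¹ * y, hyN⟩, ?_, by simp [smul_eq_mul]⟩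
    rw [Set.mem_preimage]
    have : ((x₀⁻¹ * y) * x₀) ^ n ∈ M := by
      have hcp := conj_pow_eq (x₀⁻¹ * y) x₀ n
      have : (x₀ * (x₀⁻¹ * y)) ^ n = 1 := by
        rw [mul_inv_cancel_left]
        exact hyX
      rw [this] at hcp
      rw [hcp]
      simpa using M.one_mem
    exact (hkey ⟨x₀⁻¹ * y, hyN⟩).mpr this
  have hμlt : c'' * μ (N : Set G) < Nat.card Y * μ (M : Set G) := by
    calc c'' * μ (N : Set G) < μ (X ∩ cosetSet q) := hq
      _ = μ (x₀⁻¹ • (X ∩ cosetSet q)) := (measure_smul_set' μ x₀⁻¹ _).symm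
      _ ≤ μ (Subtype.val '' ((QuotientGroup.mk : N → H) ⁻¹' Y)) := measure_mono hsub
      _ = Nat.card Y * μ (M : Set G) := hμT
  rw [hμN_eq, ← mul_assoc] at hμlt
  -- turn into reals
  have hcardH : 0 < Nat.card H := Nat.card_pos
  have hreal : c' * (Nat.card H : ℝ) < (Nat.card Y : ℝ) := by
    have ha : (0:ℝ) < (μ (M : Set G)).toReal :=
      ENNReal.toReal_pos hμM0 hμMtop
    have h8 : (c'' * (Nat.card H : ℝ≥0∞)) * μ (M : Set G) ≠ ⊤ :=
      ENNReal.mul_ne_top (ENNReal.mul_ne_top hc''top (ENNReal.natCast_ne_top _)) hμMtop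
    have h9 : (Nat.card Y : ℝ≥0∞) * μ (M : Set G) ≠ ⊤ :=
      ENNReal.mul_ne_top (ENNReal.natCast_ne_top _) hμMtop
    have h10 := (ENNReal.toReal_lt_toReal h8 h9).mpr hμlt
    rw [ENNReal.toReal_mul, ENNReal.toReal_mul, ENNReal.toReal_mul,
      ENNReal.toReal_ofReal hc'0.le, ENNReal.toReal_natCast, ENNReal.toReal_natCast] at h10
    exact lt_of_mul_lt_mul_right h10 ha.le
  have hratio : c' < (Nat.card Y : ℝ) / (Nat.card H : ℝ) := by
    rw [lt_div_iff₀ (by exact_mod_cast hcardH)]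
    linarith [hreal]
  have hratio1 : (Nat.card Y : ℝ) / (Nat.card H : ℝ) = 1 := by
    by_contra hne
    have := hub H φ hφn hne
    have hcc' : c ≤ c' := le_max_left _ _
    linarith
  have hcards : Nat.card Y = Nat.card H := by
    have hH0 : (Nat.card H : ℝ) ≠ 0 := by exact_mod_cast hcardH.ne'
    have h11 := (div_eq_one_iff_eq hH0).mp hratio1
    exact_mod_cast h11
  have hYuniv : Y = Set.univ := by
    refine Set.eq_of_subset_of_ncard_le (Set.subset_univ Y) ?_ Set.finite_univ
    rw [Set.ncard_univ, ← Nat.card_coe_set_eq, hcards]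
  -- conclude
  have hwY : (QuotientGroup.mk ⟨w, hw⟩ : H) ∈ Y := by
    rw [hYuniv]; trivial
  have hwM : (w * x₀) ^ n ∈ M := (hkey ⟨w, hw⟩).mp hwY
  exact hzM hwM
end

section
/- Let G be a compact group and α an automorphism of G with α³ = id, and suppose the set X = {x ∈ G : x · x^α · x^{α²} = 1} is measurable with Haar measure m(X) > 15/16. Then G is a 2-Engel group, i.e., [a,b,b] = 1 for all a, b ∈ G. -/
open MeasureTheory ENNReal

/-- The commutator `[a,b] = a⁻¹ b⁻¹ a b` (the convention used in the paper). -/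
def pcomm {G : Type*} [Group G] (a b : G) : G := a⁻¹ * b⁻¹ * a * b

set_option maxHeartbeats 1000000 in
/-- The purely group-theoretic core: if the seven listed "twisted cube" relations hold
(for the elements `a, b, a⁻¹, ab, ab⁻¹, ba⁻¹, b⁻¹a⁻¹`, with `A B P Q` playing the roles of
`σ a, σ b, σ² a, σ² b`), then `[a,b,b] = 1`. -/
private lemma engel_aux {G : Type*} [Group G] (a b A B P Q : G)
    (h1 : a * A * P = 1) (h2 : b * B * Q = 1)
    (h3 : a⁻¹ * A⁻¹ * P⁻¹ = 1)
    (h4 : a * b * (A * B) * (P * Q) = 1)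
    (h5 : a * b⁻¹ * (A * B⁻¹) * (P * Q⁻¹) = 1)
    (h6 : b * a⁻¹ * (B * A⁻¹) * (Q * P⁻¹) = 1)
    (h7 : b⁻¹ * a⁻¹ * (B⁻¹ * A⁻¹) * (Q⁻¹ * P⁻¹) = 1) :
    (a⁻¹ * b⁻¹ * a * b)⁻¹ * b⁻¹ * (a⁻¹ * b⁻¹ * a * b) * b = 1 := by
  have key : (a⁻¹ * b⁻¹ * a * b)⁻¹ * b⁻¹ * (a⁻¹ * b⁻¹ * a * b) * b =
      (b⁻¹ * a⁻¹) * (b * B * Q) * (b⁻¹ * a⁻¹)⁻¹ *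
      ((b⁻¹ * a⁻¹) * (a * b * (A * B) * (P * Q))⁻¹ * (b⁻¹ * a⁻¹)⁻¹) *
      ((A * B * P * B⁻¹ * a * b⁻¹) * (b * a⁻¹ * (B * A⁻¹) * (Q * P⁻¹))⁻¹ * (A * B * P * B⁻¹ * a * b⁻¹)⁻¹) *
      ((A * B * P * A⁻¹ * Q * P⁻¹) * (a⁻¹ * A⁻¹ * P⁻¹) * (A * B * P * A⁻¹ * Q * P⁻¹)⁻¹) *
      ((A * B * P) * (a * A * P) * (A * B * P)⁻¹) *
      ((A * B * A⁻¹) * (a⁻¹ * A⁻¹ * P⁻¹) * (A * B * A⁻¹)⁻¹) *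
      ((A * B * A⁻¹) * (b⁻¹ * a⁻¹ * (B⁻¹ * A⁻¹) * (Q⁻¹ * P⁻¹))⁻¹ * (A * B * A⁻¹)⁻¹) *
      ((A * B * A⁻¹ * b⁻¹ * a⁻¹ * B⁻¹ * b⁻¹) * (b * B * Q)⁻¹ * (A * B * A⁻¹ * b⁻¹ * a⁻¹ * B⁻¹ * b⁻¹)⁻¹) *
      ((A * B * A⁻¹ * b⁻¹ * a⁻¹ * Q) * (a * b * (A * B) * (P * Q)) * (A * B * A⁻¹ * b⁻¹ * a⁻¹ * Q)⁻¹) *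
      ((A * B * A⁻¹ * b⁻¹ * a⁻¹) * (a * A * P)⁻¹ * (A * B * A⁻¹ * b⁻¹ * a⁻¹)⁻¹) *
      ((A * B * A⁻¹ * b⁻¹ * A * B⁻¹ * P * Q⁻¹) * (a * b⁻¹ * (A * B⁻¹) * (P * Q⁻¹)) * (A * B * A⁻¹ * b⁻¹ * A * B⁻¹ * P * Q⁻¹)⁻¹) *
      ((A * B * A⁻¹ * a⁻¹ * Q) * (a * A * P)⁻¹ * (A * B * A⁻¹ * a⁻¹ * Q)⁻¹) *
      ((A * B * A⁻¹ * a⁻¹) * (a * A * P)⁻¹ * (A * B * A⁻¹ * a⁻¹)⁻¹) *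
      ((A * B * P * Q) * (a * b * (A * B) * (P * Q)) * (A * B * P * Q)⁻¹) := by
    group
  rw [h1, h2, h3, h4, h5, h6, h7] at key
  rw [key]
  group

/-- Let `G` be a compact group with normalized Haar measure `μ` and `α` an
automorphism with `α ^ 3 = 1` such that `X = {x | x * x^α * x^{α²} = 1}` is measurable
with `μ X > 15/16`.  Then `G` is a `2`-Engel group: `[a,b,b] = 1` for all `a b`. -/
theorem twoEngel_of_haar_gt {G : Type*} [Group G] [TopologicalSpace G]
    [IsTopologicalGroup G] [CompactSpace G] [MeasurableSpace G] [BorelSpace G]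
    (μ : Measure G) [μ.IsHaarMeasure] [IsProbabilityMeasure μ]
    (α : MulAut G) (hcont : Continuous ⇑α) (hα : α ^ 3 = 1)
    (hmeas : MeasurableSet {x : G | x * α x * (α ^ 2) x = 1})
    (hX : 15 / 16 < μ {x : G | x * α x * (α ^ 2) x = 1}) :
    ∀ a b : G, pcomm (pcomm a b) b = 1 := by
  intro a b
  set X : Set G := {x : G | x * α x * (α ^ 2) x = 1} with hXdef
  have hsq : ∀ y : G, (α ^ 2) y = α (α y) := by
    intro y; rw [sq, MulAut.mul_apply]
  -- the eight translates
  have hex : ∃ x : G, ∀ i : Fin 8,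
      (![1, a, a⁻¹, b, a * b, a * b⁻¹, b * a⁻¹, b⁻¹ * a⁻¹] : Fin 8 → G) i * x ∈ X := by
    set v : Fin 8 → G := ![1, a, a⁻¹, b, a * b, a * b⁻¹, b * a⁻¹, b⁻¹ * a⁻¹] with hvdef
    have hSmeas : ∀ i : Fin 8, MeasurableSet {y : G | v i * y ∈ X} :=
      fun i => hmeas.preimage (measurable_const_mul (v i))
    have hSμ : ∀ i : Fin 8, μ {y : G | v i * y ∈ X} = μ X :=
      fun i => measure_preimage_mul μ (v i) X
    by_contra hemp
    push_neg at hemp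
    have hcover : (Set.univ : Set G) ⊆ ⋃ i : Fin 8, {y : G | v i * y ∈ X}ᶜ := by
      intro y _
      obtain ⟨i, hi⟩ := hemp y
      exact Set.mem_iUnion.mpr ⟨i, hi⟩
    have h1le : (1 : ℝ≥0∞) ≤ ∑ i : Fin 8, μ ({y : G | v i * y ∈ X}ᶜ) := by
      calc (1 : ℝ≥0∞) = μ Set.univ := (measure_univ).symm
        _ ≤ μ (⋃ i : Fin 8, {y : G | v i * y ∈ X}ᶜ) := measure_mono hcover
        _ ≤ ∑ i : Fin 8, μ ({y : G | v i * y ∈ X}ᶜ) := measure_iUnion_fintype_le _ _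
    have hterm : ∀ i : Fin 8, μ ({y : G | v i * y ∈ X}ᶜ) ≤ 1 / 16 := by
      intro i
      rw [measure_compl (hSmeas i) (measure_ne_top μ _), measure_univ, hSμ i,
        tsub_le_iff_right]
      have h15 : (1 : ℝ≥0∞) = 1 / 16 + 15 / 16 := by
        rw [ENNReal.div_add_div_same, show (1 : ℝ≥0∞) + 15 = 16 by norm_num,
          ENNReal.div_self (by norm_num) (by norm_num)]
      exact le_trans (le_of_eq h15) (add_le_add_right hX.le _)
    have hsum : ∑ i : Fin 8, μ ({y : G | v i * y ∈ X}ᶜ) ≤ 8 * (1 / 16 : ℝ≥0∞) := by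
      calc ∑ i : Fin 8, μ ({y : G | v i * y ∈ X}ᶜ) ≤ ∑ _i : Fin 8, (1 / 16 : ℝ≥0∞) :=
            Finset.sum_le_sum fun i _ => hterm i
        _ = 8 * (1 / 16 : ℝ≥0∞) := by
            rw [Finset.sum_const, Finset.card_univ, Fintype.card_fin, nsmul_eq_mul]
            norm_num
    have hlt : (8 : ℝ≥0∞) * (1 / 16) < 1 := by
      rw [mul_one_div, ENNReal.div_lt_iff (by norm_num) (by norm_num)]
      norm_num
    exact absurd (le_trans h1le hsum) (not_le.mpr hlt)
  obtain ⟨x, hmem⟩ := hex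
  -- the twisted conjugation endomorphism  σ g = x (α g) x⁻¹
  obtain ⟨σ, hσ⟩ : ∃ σ : G → G, σ = fun g => x * α g * x⁻¹ := ⟨_, rfl⟩
  have hx' : x * α x * (α ^ 2) x = 1 := by
    have h0 := hmem 0
    rw [show (![1, a, a⁻¹, b, a * b, a * b⁻¹, b * a⁻¹, b⁻¹ * a⁻¹] : Fin 8 → G) 0 = 1 from rfl,
      one_mul, hXdef, Set.mem_setOf_eq] at h0
    exact h0
  have hσmul : ∀ g h : G, σ (g * h) = σ g * σ h := by
    intro g h
    simp only [hσ, map_mul]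
    group
  have hσinv : ∀ g : G, σ g⁻¹ = (σ g)⁻¹ := by
    intro g
    simp only [hσ, map_inv]
    group
  have hphi : ∀ g : G, g * x ∈ X → g * σ g * σ (σ g) = 1 := by
    intro g hg
    rw [hXdef, Set.mem_setOf_eq] at hg
    have e : g * σ g * σ (σ g) =
        (g * x * α (g * x) * (α ^ 2) (g * x)) * (x * α x * (α ^ 2) x)⁻¹ := by
      simp only [hσ, map_mul, map_inv, hsq]
      group
    rw [hg, hx'] at e
    simpa using e
  have h1 := hphi a (hmem 1)
  have h2 := hphi b (hmem 3)
  have h3 := hphi a⁻¹ (hmem 2)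
  have h4 := hphi (a * b) (hmem 4)
  have h5 := hphi (a * b⁻¹) (hmem 5)
  have h6 := hphi (b * a⁻¹) (hmem 6)
  have h7 := hphi (b⁻¹ * a⁻¹) (hmem 7)
  simp only [hσinv] at h3
  simp only [hσmul] at h4
  simp only [hσmul, hσinv] at h5 h6 h7
  exact engel_aux a b (σ a) (σ b) (σ (σ a)) (σ (σ b)) h1 h2 h3 h4 h5 h6 h7
end

section
/- Every 2-Engel group is nilpotent of class at most 3. -/
open scoped commutatorElement

namespace TwoEngelAux

variable {G : Type*} [Group G]

/-- The subgroup generated by all conjugates of `x`. -/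
def N (x : G) : Subgroup G := Subgroup.closure (Set.range fun g => g * x * g⁻¹)

lemma conj_mem_N (x g : G) : g * x * g⁻¹ ∈ N x :=
  Subgroup.subset_closure ⟨g, rfl⟩

lemma mem_N (x : G) : x ∈ N x := by
  have h := conj_mem_N x 1
  simpa using h

lemma N_conj {x u : G} (hu : u ∈ N x) (g : G) : g * u * g⁻¹ ∈ N x := by
  induction hu using Subgroup.closure_induction with
  | mem y hy =>
      obtain ⟨h, rfl⟩ := hy
      have e : g * (h * x * h⁻¹) * g⁻¹ = (g * h) * x * (g * h)⁻¹ := by group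
      rw [e]; exact conj_mem_N x (g * h)
  | one => simpa using (N x).one_mem
  | mul a b ha hb pa pb =>
      have e : g * (a * b) * g⁻¹ = (g * a * g⁻¹) * (g * b * g⁻¹) := by group
      rw [e]; exact mul_mem pa pb
  | inv a ha pa =>
      have e : g * a⁻¹ * g⁻¹ = (g * a * g⁻¹)⁻¹ := by group
      rw [e]; exact inv_mem pa

lemma commutator_mem_N_left {x u : G} (hu : u ∈ N x) (a : G) : ⁅u, a⁆ ∈ N x := by
  have e : ⁅u, a⁆ = u * (a * u⁻¹ * a⁻¹) := by rw [commutatorElement_def]; group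
  rw [e]; exact mul_mem hu (N_conj (inv_mem hu) a)

lemma commutator_mem_N_right {x u : G} (hu : u ∈ N x) (a : G) : ⁅a, u⁆ ∈ N x := by
  have e : ⁅a, u⁆ = (a * u * a⁻¹) * u⁻¹ := by rw [commutatorElement_def]
  rw [e]; exact mul_mem (N_conj hu a) (inv_mem hu)

lemma comm_mem_left (x a : G) : ⁅x, a⁆ ∈ N x := commutator_mem_N_left (mem_N x) a

lemma comm_mem_right (a x : G) : ⁅a, x⁆ ∈ N x := commutator_mem_N_right (mem_N x) a

lemma commute_conj {a b : G} (h : Commute a b) (g : G) :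
    Commute (g * a * g⁻¹) (g * b * g⁻¹) := by
  have e1 : (g * a * g⁻¹) * (g * b * g⁻¹) = g * (a * b) * g⁻¹ := by group
  have e2 : (g * b * g⁻¹) * (g * a * g⁻¹) = g * (b * a) * g⁻¹ := by group
  show (g * a * g⁻¹) * (g * b * g⁻¹) = (g * b * g⁻¹) * (g * a * g⁻¹)
  rw [e1, e2, h.eq]

lemma conjL {g u : G} (h : Commute g u) : g * u * g⁻¹ = u := by
  rw [h.eq, mul_inv_cancel_right]

lemma conjR {g u : G} (h : Commute g u) : g⁻¹ * u * g = u := by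
  rw [mul_assoc, ← h.eq, inv_mul_cancel_left]

section WithEngel

variable (hE : ∀ a b : G, Commute ⁅a, b⁆ b)
include hE

lemma commA (a b : G) : Commute ⁅a, b⁆ a := by
  have h := (hE b a).inv_left
  rwa [commutatorElement_inv] at h

lemma conj_self_comm (x k : G) : Commute x (k * x * k⁻¹) := by
  have h1 : Commute x ⁅k, x⁆ := (hE k x).symm
  have e : k * x * k⁻¹ = ⁅k, x⁆ * x := by rw [commutatorElement_def]; group
  rw [e]; exact h1.mul_right (Commute.refl x)

lemma conj_conj_comm (x g h : G) : Commute (g * x * g⁻¹) (h * x * h⁻¹) := by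
  have base := conj_self_comm hE x (g⁻¹ * h)
  have h2 := commute_conj base g
  have e1 : g * x * g⁻¹ = g * x * g⁻¹ := rfl
  have e2 : g * (g⁻¹ * h * x * (g⁻¹ * h)⁻¹) * g⁻¹ = h * x * h⁻¹ := by group
  rwa [e2] at h2

lemma cN {x u v : G} (hu : u ∈ N x) (hv : v ∈ N x) : Commute u v := by
  induction hu, hv using Subgroup.closure_induction₂ with
  | mem p q hp hq =>
      obtain ⟨g, rfl⟩ := hp
      obtain ⟨h, rfl⟩ := hq
      exact conj_conj_comm hE x g h
  | one_left q hq => exact Commute.one_left q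
  | one_right p hp => exact Commute.one_right p
  | mul_left p q r hp hq hr h1 h2 => exact h1.mul_left h2
  | mul_right q r p hq hr hp h1 h2 => exact h1.mul_right h2
  | inv_left p q hp hq h1 => exact h1.inv_left
  | inv_right p q hp hq h1 => exact h1.inv_right

lemma inv_left' (a b : G) : ⁅a⁻¹, b⁆ = ⁅a, b⁆⁻¹ := by
  have e : ⁅a⁻¹, b⁆ = a⁻¹ * ⁅b, a⁆ * a := by
    rw [commutatorElement_def, commutatorElement_def]; group
  rw [e, ← commutatorElement_inv]
  exact conjR ((commA hE a b).symm.inv_right)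

lemma inv_right' (a b : G) : ⁅a, b⁻¹⁆ = ⁅a, b⁆⁻¹ := by
  have e : ⁅a, b⁻¹⁆ = b⁻¹ * ⁅b, a⁆ * b := by
    rw [commutatorElement_def, commutatorElement_def]; group
  rw [e, ← commutatorElement_inv]
  exact conjR ((hE a b).symm.inv_right)

end WithEngel

lemma expand_right (a b c : G) : ⁅a, b * c⁆ = ⁅a, b⁆ * (b * ⁅a, c⁆ * b⁻¹) := by
  simp only [commutatorElement_def]; group

lemma expand_left (a b c : G) : ⁅a * b, c⁆ = (a * ⁅b, c⁆ * a⁻¹) * ⁅a, c⁆ := by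
  simp only [commutatorElement_def]; group

lemma conj_form (z A : G) : z * A * z⁻¹ = A * ⁅A⁻¹, z⁆ := by
  simp only [commutatorElement_def]; group

section Core

variable (hE : ∀ a b : G, Commute ⁅a, b⁆ b)
include hE

lemma split (a b c : G) : ⁅a, b * c⁆ = ⁅a, b⁆ * (⁅a, c⁆ * ⁅⁅a, c⁆, b⁆⁻¹) := by
  rw [expand_right, conj_form b ⁅a, c⁆, inv_left' hE]

lemma K1 (x y z : G) : ⁅⁅x, z⁆, y⁆ = ⁅⁅x, y⁆, z⁆⁻¹ := by
  have memU : ⁅x, y⁆ ∈ N x := comm_mem_left x y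
  have memF : ⁅⁅x, z⁆, y⁆ ∈ N x := commutator_mem_N_left (comm_mem_left x z) y
  have memEy : ⁅⁅x, y⁆, z⁆ ∈ N y := commutator_mem_N_left (comm_mem_right x y) z
  have memFz : ⁅⁅x, z⁆, y⁆ ∈ N z := commutator_mem_N_left (comm_mem_right x z) y
  have hA : ⁅⁅x, y⁆, y * z⁆ = ⁅⁅x, y⁆, z⁆ := by
    rw [expand_right, (hE x y).commutator_eq, one_mul,
      conjL (cN hE (mem_N y) memEy)]
  have hB : ⁅⁅x, z⁆, y * z⁆ = ⁅⁅x, z⁆, y⁆ := by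
    rw [expand_right, (hE x z).commutator_eq]
    simp
  have hC : ⁅⁅⁅x, z⁆, y⁆⁻¹, y * z⁆ = 1 := by
    rw [inv_left' hE, expand_right, (hE ⁅x, z⁆ y).commutator_eq,
      (cN hE memFz (mem_N z)).commutator_eq]
    simp
  have h0 : ⁅⁅x, y * z⁆, y * z⁆ = 1 := (hE x (y * z)).commutator_eq
  rw [split hE x y z] at h0
  rw [expand_left, expand_left] at h0
  rw [hA, hB, hC] at h0
  simp only [mul_one, mul_inv_cancel, one_mul] at h0
  rw [conjL (cN hE memU memF)] at h0
  exact eq_inv_of_mul_eq_one_left h0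

lemma K2 (x y t z : G) : ⁅⁅⁅x, y⁆, t⁆, z⁆ = ⁅⁅⁅x, t⁆, z⁆, y⁆⁻¹ := by
  have memxt : ⁅x, t⁆ ∈ N x := comm_mem_left x t
  have memxz : ⁅x, z⁆ ∈ N x := comm_mem_left x z
  have memm : ⁅⁅⁅x, t⁆, z⁆, y⁆ ∈ N x :=
    commutator_mem_N_left (commutator_mem_N_left memxt z) y
  have memq : ⁅⁅x, y⁆, t⁆ ∈ N x := commutator_mem_N_left (comm_mem_left x y) t
  have base := K1 hE x y (z * t)
  rw [split hE x z t] at base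
  rw [expand_left, expand_left] at base
  rw [inv_left' hE] at base
  rw [conjL ((cN hE memxt memm).inv_right)] at base
  rw [K1 hE x y t] at base
  rw [K1 hE x y z] at base
  rw [conjL (((cN hE memxz memm).inv_right).mul_right ((cN hE memxz memq).inv_right))] at base
  rw [split hE ⁅x, y⁆ z t] at base
  simp only [mul_inv_rev, inv_inv] at base
  exact (mul_right_cancel (mul_right_cancel base)).symm

lemma pcomm_eq (u v : G) : pcomm u v = ⁅u, v⁆ := by
  have e : pcomm u v = ⁅u⁻¹, v⁻¹⁆ := by
    unfold pcomm; rw [commutatorElement_def]; group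
  rw [e, inv_left' hE, inv_right' hE, inv_inv]

omit hE in
lemma hallWittFree (a b c : G) :
    (b⁻¹ * (pcomm (pcomm a b⁻¹) c) * b) * ((c⁻¹ * (pcomm (pcomm b c⁻¹) a) * c) *
      (a⁻¹ * (pcomm (pcomm c a⁻¹) b) * a)) = 1 := by
  simp only [pcomm]; group

lemma jac (a b c : G) : ⁅⁅a, b⁆, c⁆ * ⁅⁅b, c⁆, a⁆ * ⁅⁅c, a⁆, b⁆ = 1 := by
  have hw := hallWittFree a b c
  simp only [pcomm_eq hE] at hw
  rw [inv_right' hE a b, inv_right' hE b c, inv_right' hE c a] at hw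
  rw [inv_left' hE ⁅a, b⁆ c, inv_left' hE ⁅b, c⁆ a, inv_left' hE ⁅c, a⁆ b] at hw
  have hb1 : Commute b ⁅⁅a, b⁆, c⁆⁻¹ :=
    (cN hE (mem_N b) (commutator_mem_N_left (comm_mem_right a b) c)).inv_right
  have hc1 : Commute c ⁅⁅b, c⁆, a⁆⁻¹ :=
    (cN hE (mem_N c) (commutator_mem_N_left (comm_mem_right b c) a)).inv_right
  have ha1 : Commute a ⁅⁅c, a⁆, b⁆⁻¹ :=
    (cN hE (mem_N a) (commutator_mem_N_left (comm_mem_right c a) b)).inv_right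
  rw [conjR hb1, conjR hc1, conjR ha1] at hw
  have m2a : ⁅⁅b, c⁆, a⁆ ∈ N a := comm_mem_right _ a
  have m3a : ⁅⁅c, a⁆, b⁆ ∈ N a := commutator_mem_N_left (comm_mem_right c a) b
  have c23 : Commute ⁅⁅b, c⁆, a⁆ ⁅⁅c, a⁆, b⁆ := cN hE m2a m3a
  have hE1 : ⁅⁅a, b⁆, c⁆ = ⁅⁅b, c⁆, a⁆⁻¹ * ⁅⁅c, a⁆, b⁆⁻¹ := inv_mul_eq_one.mp hw
  rw [hE1]
  have h3 : ⁅⁅b, c⁆, a⁆⁻¹ * ⁅⁅c, a⁆, b⁆⁻¹ * ⁅⁅b, c⁆, a⁆ * ⁅⁅c, a⁆, b⁆ =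
      ⁅⁅b, c⁆, a⁆⁻¹ * (⁅⁅c, a⁆, b⁆⁻¹ * ⁅⁅b, c⁆, a⁆) * ⁅⁅c, a⁆, b⁆ := by group
  rw [h3, (c23.symm.inv_left).eq]
  group

end Core

theorem aux_cancel {H : Type*} [CommGroup H] {a b c d e f g h k : H}
    (main : a * (b * c⁻¹) * ((d⁻¹ * e) * f) * (g * (h⁻¹ * k)) = 1)
    (J1 : a * f * g = 1) (J2 : b * e * k = 1) : h * d * c = 1 := by
  have key : h * d * c =
      a * f * g * (b * e * k *
        (a * (b * c⁻¹) * ((d⁻¹ * e) * f) * (g * (h⁻¹ * k)))⁻¹) := by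
    apply Additive.ofMul.injective
    simp only [ofMul_mul, ofMul_inv]
    abel
  rw [key, main, J1, J2]
  simp

section Core2

variable (hE : ∀ a b : G, Commute ⁅a, b⁆ b)
include hE

lemma Qlemma (x y z t : G) :
    ⁅⁅⁅t, x⁆, z⁆, y⁆ * ⁅⁅⁅y, t⁆, z⁆, x⁆ * ⁅⁅⁅x, y⁆, t⁆, z⁆ = 1 := by
  have ma : ⁅⁅x, y⁆, z⁆ ∈ N x := commutator_mem_N_left (comm_mem_left x y) z
  have mb : ⁅⁅x, y⁆, t⁆ ∈ N x := commutator_mem_N_left (comm_mem_left x y) t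
  have mc : ⁅⁅⁅x, y⁆, t⁆, z⁆ ∈ N x := commutator_mem_N_left mb z
  have md : ⁅⁅⁅y, t⁆, z⁆, x⁆ ∈ N x := comm_mem_right _ x
  have me : ⁅⁅y, t⁆, x⁆ ∈ N x := comm_mem_right _ x
  have mf : ⁅⁅y, z⁆, x⁆ ∈ N x := comm_mem_right _ x
  have mg : ⁅⁅z, x⁆, y⁆ ∈ N x := commutator_mem_N_left (comm_mem_right z x) y
  have mh : ⁅⁅⁅t, x⁆, z⁆, y⁆ ∈ N x :=
    commutator_mem_N_left (commutator_mem_N_left (comm_mem_right t x) z) y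
  have mk : ⁅⁅t, x⁆, y⁆ ∈ N x := commutator_mem_N_left (comm_mem_right t x) y
  have myD : ⁅⁅⁅y, t⁆, z⁆, x⁆ ∈ N y :=
    commutator_mem_N_left (commutator_mem_N_left (comm_mem_left y t) z) x
  have mye : ⁅⁅y, t⁆, x⁆ ∈ N y := commutator_mem_N_left (comm_mem_left y t) x
  have hT2 : ⁅⁅y, z * t⁆, x⁆ = (⁅⁅⁅y, t⁆, z⁆, x⁆⁻¹ * ⁅⁅y, t⁆, x⁆) * ⁅⁅y, z⁆, x⁆ := by
    rw [split hE y z t, expand_left, expand_left, inv_left' hE,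
      conjL ((cN hE (comm_mem_left y t) myD).inv_right),
      conjL (((cN hE (comm_mem_left y z) myD).inv_right).mul_right
        (cN hE (comm_mem_left y z) mye))]
  have mQx : ⁅⁅t, x⁆, z⁆ ∈ N x := commutator_mem_N_left (comm_mem_right t x) z
  have hT3 : ⁅⁅z * t, x⁆, y⁆ = ⁅⁅z, x⁆, y⁆ * (⁅⁅⁅t, x⁆, z⁆, y⁆⁻¹ * ⁅⁅t, x⁆, y⁆) := by
    have sub : ⁅z * t, x⁆ = (⁅t, x⁆ * ⁅⁅t, x⁆, z⁆⁻¹) * ⁅z, x⁆ := by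
      rw [expand_left, conj_form z ⁅t, x⁆, inv_left' hE]
    rw [sub, expand_left, expand_left, inv_left' hE,
      conjL ((cN hE (comm_mem_right t x) mh).inv_right),
      conjL ((cN hE (comm_mem_right t x) mg).mul_left ((cN hE mQx mg).inv_left))]
  have main0 := jac hE x y (z * t)
  rw [split hE ⁅x, y⁆ z t, hT2, hT3] at main0
  letI : CommGroup (N x) :=
    { (inferInstance : Group (N x)) with
      mul_comm := fun p q => Subtype.ext (cN hE p.2 q.2).eq }
  have main' : (⟨_, ma⟩ : N x) * (⟨_, mb⟩ * (⟨_, mc⟩ : N x)⁻¹) *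
      (((⟨_, md⟩ : N x)⁻¹ * ⟨_, me⟩) * ⟨_, mf⟩) *
      ((⟨_, mg⟩ : N x) * ((⟨_, mh⟩ : N x)⁻¹ * ⟨_, mk⟩)) = 1 := Subtype.ext main0
  have J1' : (⟨_, ma⟩ : N x) * ⟨_, mf⟩ * ⟨_, mg⟩ = 1 := Subtype.ext (jac hE x y z)
  have J2' : (⟨_, mb⟩ : N x) * ⟨_, me⟩ * ⟨_, mk⟩ = 1 := Subtype.ext (jac hE x y t)
  have res := aux_cancel main' J1' J2'
  exact congrArg Subtype.val res

lemma S1_3 (a b c : G) : ⁅⁅b, a⁆, c⁆ = ⁅⁅a, b⁆, c⁆⁻¹ := by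
  rw [← commutatorElement_inv a b, inv_left' hE]

lemma S1_4 (a b c d : G) : ⁅⁅⁅b, a⁆, c⁆, d⁆ = ⁅⁅⁅a, b⁆, c⁆, d⁆⁻¹ := by
  rw [S1_3 hE a b c, inv_left' hE]

lemma S2_4 (a b c d : G) : ⁅⁅⁅a, c⁆, b⁆, d⁆ = ⁅⁅⁅a, b⁆, c⁆, d⁆⁻¹ := by
  rw [K1 hE a b c, inv_left' hE]

lemma G4_eq_one (x y t z : G) : ⁅⁅⁅x, y⁆, t⁆, z⁆ = 1 := by
  have hQ := Qlemma hE x y z t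
  have hh1 : ⁅⁅⁅y, t⁆, z⁆, x⁆ = ⁅⁅⁅x, y⁆, t⁆, z⁆⁻¹ := by
    rw [K2 hE y t z x, K2 hE y z x t, S1_4 hE x y t z]
    simp
  have hh2 : ⁅⁅⁅t, x⁆, z⁆, y⁆ = ⁅⁅⁅x, y⁆, t⁆, z⁆⁻¹ := by
    rw [K2 hE t x z y, K2 hE t z y x, S2_4 hE t x y z, S1_4 hE x t y z, S2_4 hE x y t z]
    simp
  rw [hh1, hh2] at hQ
  have h1 : ⁅⁅⁅x, y⁆, t⁆, z⁆⁻¹ = 1 := by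
    calc ⁅⁅⁅x, y⁆, t⁆, z⁆⁻¹
        = ⁅⁅⁅x, y⁆, t⁆, z⁆⁻¹ * ⁅⁅⁅x, y⁆, t⁆, z⁆⁻¹ * ⁅⁅⁅x, y⁆, t⁆, z⁆ := by group
      _ = 1 := hQ
  exact inv_eq_one.mp h1

end Core2

end TwoEngelAux

/-- Every `2`-Engel group (`[x,y,y] = 1` for all `x y`) is nilpotent of
class at most `3`, i.e. the lower central series reaches the trivial subgroup in three
steps. -/
theorem twoEngel_nilpotent_class_le_three {G : Type*} [Group G]
    (hG : ∀ x y : G, pcomm (pcomm x y) y = 1) :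
    (⊤ : Subgroup G).lowerCentralSeries 3 = ⊥ := by
  have hE : ∀ a b : G, Commute ⁅a, b⁆ b := by
    intro a b
    have h := hG a⁻¹ b⁻¹
    have e1 : pcomm a⁻¹ b⁻¹ = ⁅a, b⁆ := by
      unfold pcomm; rw [commutatorElement_def]; group
    rw [e1] at h
    have e2 : pcomm ⁅a, b⁆ b⁻¹ = ⁅⁅a, b⁆⁻¹, b⁆ := by
      unfold pcomm; rw [commutatorElement_def]; group
    rw [e2] at h
    have hc := commutatorElement_eq_one_iff_commute.mp h
    have hc2 := hc.inv_left
    rwa [inv_inv] at hc2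
  have key : ∀ a b c d : G, ⁅⁅⁅a, b⁆, c⁆, d⁆ = 1 := fun a b c d =>
    TwoEngelAux.G4_eq_one hE a b c d
  have hcen : ∀ a b c : G, ⁅⁅a, b⁆, c⁆ ∈ Subgroup.center G := by
    intro a b c
    rw [Subgroup.mem_center_iff]
    intro d
    have h := commutatorElement_eq_one_iff_commute.mp (key a b c d)
    exact h.eq.symm
  have step1 : (⊤ : Subgroup G).lowerCentralSeries 1 ≤ Subgroup.upperCentralSeries G 2 := by
    rw [show (1 : ℕ) = 0 + 1 from rfl, lowerCentralSeries_succ, Subgroup.commutator_def]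
    apply (Subgroup.closure_le _).mpr
    rintro w ⟨p, hp, q, hq, rfl⟩
    rw [SetLike.mem_coe, show (2 : ℕ) = 1 + 1 from rfl, mem_upperCentralSeries_succ_iff]
    intro y
    rw [upperCentralSeries_one]
    have e : p * q * p⁻¹ * q⁻¹ * y * (p * q * p⁻¹ * q⁻¹)⁻¹ * y⁻¹ = ⁅⁅p, q⁆, y⁆ := by
      simp only [commutatorElement_def]
    exact hcen p q y
  have step2 : (⊤ : Subgroup G).lowerCentralSeries 2 ≤ Subgroup.center G := by
    rw [show (2 : ℕ) = 1 + 1 from rfl, lowerCentralSeries_succ, Subgroup.commutator_def]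
    apply (Subgroup.closure_le _).mpr
    rintro w ⟨p, hp, q, hq, rfl⟩
    have hp2 := step1 hp
    rw [show (2 : ℕ) = 1 + 1 from rfl, mem_upperCentralSeries_succ_iff] at hp2
    have h := hp2 q
    rwa [upperCentralSeries_one] at h
  have step3 : (⊤ : Subgroup G).lowerCentralSeries 3 ≤ ⊥ := by
    rw [show (3 : ℕ) = 2 + 1 from rfl, lowerCentralSeries_succ, Subgroup.commutator_def]
    apply (Subgroup.closure_le _).mpr
    rintro w ⟨p, hp, q, hq, rfl⟩
    have hpc := step2 hp
    rw [Subgroup.mem_center_iff] at hpc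
    have e : p * q * p⁻¹ * q⁻¹ = 1 := by
      rw [← hpc q, mul_inv_cancel_right, mul_inv_cancel]
    simp [commutatorElement_def, e]
  exact le_bot_iff.mp step3
end

section
/- Let G be a group that is nilpotent of class at most 3, and let α be an automorphism of G with α³ = id. Suppose x, g ∈ G are such that x x^α x^{α²} = 1 and (gx)(gx)^α(gx)^{α²} = 1, and moreover [a,b,c] = 1 whenever a, b, c ∈ {x, x^α, x^{α²}, h} with at least two of a,b,c among {x, x^α, x^{α²}}, for all h ∈ G. Then (g g^α g^{α²})⁻¹ = [x, g^α]·[x, g^α, g^{α²}]·[g^{α²}, x^{α²}]. -/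
section Aux

variable {G : Type*} [Group G]

open scoped commutatorElement

lemma pcomm_eq_commutatorElement (a b : G) : pcomm a b = ⁅a⁻¹, b⁻¹⁆ := by
  rw [commutatorElement_def, pcomm]; group

lemma commute_of_pcomm {a b : G} (h : pcomm a b = 1) : Commute a b := by
  have h2 : b * a * (a⁻¹ * b⁻¹ * a * b) = b * a * 1 := by
    rw [show a⁻¹ * b⁻¹ * a * b = pcomm a b from rfl, h]
  exact (by simpa [mul_assoc] using h2 : a * b = b * a)

lemma pcomm_mem_lcs1 (a b : G) : pcomm a b ∈ (⊤ : Subgroup G).lowerCentralSeries 1 := by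
  rw [pcomm_eq_commutatorElement, Subgroup.lowerCentralSeries_succ]
  exact Subgroup.commutator_mem_commutator (by rw [Subgroup.lowerCentralSeries_zero]; trivial)
    (Subgroup.mem_top _)

lemma pcomm_mem_lcs_succ {u : G} {n : ℕ} (h : u ∈ (⊤ : Subgroup G).lowerCentralSeries n) (c : G) :
    pcomm u c ∈ (⊤ : Subgroup G).lowerCentralSeries (n + 1) := by
  rw [pcomm_eq_commutatorElement, Subgroup.lowerCentralSeries_succ]
  exact Subgroup.commutator_mem_commutator (inv_mem h) (Subgroup.mem_top _)

lemma central_of_lcs2 (hnil : (⊤ : Subgroup G).lowerCentralSeries 3 = ⊥) {u : G}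
    (h : u ∈ (⊤ : Subgroup G).lowerCentralSeries 2) (z : G) : Commute u z := by
  have h3 : ⁅u, z⁆ ∈ (⊤ : Subgroup G).lowerCentralSeries 3 := by
    rw [Subgroup.lowerCentralSeries_succ]
    exact Subgroup.commutator_mem_commutator h (Subgroup.mem_top _)
  rw [hnil, Subgroup.mem_bot] at h3
  exact commutatorElement_eq_one_iff_commute.mp h3

lemma commute_of_lcs1 (hnil : (⊤ : Subgroup G).lowerCentralSeries 3 = ⊥) {u v : G}
    (hu : u ∈ (⊤ : Subgroup G).lowerCentralSeries 1) (hv : v ∈ (⊤ : Subgroup G).lowerCentralSeries 1) :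
    Commute u v := by
  have hD : (⊤ : Subgroup G).lowerCentralSeries 1 = ⁅(⊤ : Subgroup G), (⊤ : Subgroup G)⁆ := rfl
  have hnil' : ⁅⁅⁅(⊤ : Subgroup G), (⊤ : Subgroup G)⁆, (⊤ : Subgroup G)⁆,
      (⊤ : Subgroup G)⁆ = ⊥ := hnil
  have key : ⁅⁅(⊤ : Subgroup G), (⊤ : Subgroup G)⁆, ⁅(⊤ : Subgroup G), (⊤ : Subgroup G)⁆⁆
      = ⊥ := by
    apply Subgroup.commutator_commutator_eq_bot_of_rotate
    · rw [Subgroup.commutator_comm (⊤ : Subgroup G) ⁅(⊤ : Subgroup G), (⊤ : Subgroup G)⁆]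
      exact hnil'
    · exact hnil'
  rw [hD] at hu hv
  have : ⁅u, v⁆ ∈ (⊥ : Subgroup G) := key ▸ Subgroup.commutator_mem_commutator hu hv
  rw [Subgroup.mem_bot] at this
  exact commutatorElement_eq_one_iff_commute.mp this

/-- Abstract core computation. -/
lemma key_aux (x1 x2 x3 g1 g2 g3 c12 c13 c23 T : G)
    (h1 : x1 * x2 * x3 = 1)
    (h2 : g1 * x1 * (g2 * x2) * (g3 * x3) = 1)
    (d12 : x1 * g2 = g2 * (x1 * c12))
    (d13 : x1 * g3 = g3 * (x1 * c13))
    (d23 : x2 * g3 = g3 * (x2 * c23))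
    (dT : c12 * g3 = g3 * (c12 * T))
    (hc12x2 : Commute c12 x2) (hc12x3 : Commute c12 x3)
    (hc23x3 : Commute c23 x3)
    (hc13x2 : Commute c13 x2) (hc13x3 : Commute c13 x3)
    (hTc13 : Commute T c13) (hTc23 : Commute T c23) (hTx3 : Commute T x3)
    (hE1 : Commute c12 c13) (hE2 : Commute c12 c23) :
    (g1 * g2 * g3)⁻¹ = c12 * (T * (c13 * c23)) := by
  have key1 : g1 * x1 * (g2 * x2) * (g3 * x3)
      = g1 * g2 * g3 * (x1 * x2 * x3) * (c13 * (c23 * (c12 * T))) := by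
    calc g1 * x1 * (g2 * x2) * (g3 * x3)
        = g1 * ((x1 * g2) * (x2 * (g3 * x3))) := by group
      _ = g1 * ((g2 * (x1 * c12)) * (x2 * (g3 * x3))) := by rw [d12]
      _ = g1 * g2 * x1 * ((c12 * x2) * (g3 * x3)) := by group
      _ = g1 * g2 * x1 * ((x2 * c12) * (g3 * x3)) := by rw [hc12x2.eq]
      _ = g1 * g2 * x1 * (x2 * ((c12 * g3) * x3)) := by group
      _ = g1 * g2 * x1 * (x2 * ((g3 * (c12 * T)) * x3)) := by rw [dT]
      _ = g1 * g2 * x1 * (x2 * g3) * (c12 * (T * x3)) := by group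
      _ = g1 * g2 * x1 * (x2 * g3) * (c12 * (x3 * T)) := by rw [hTx3.eq]
      _ = g1 * g2 * x1 * (x2 * g3) * ((c12 * x3) * T) := by group
      _ = g1 * g2 * x1 * (x2 * g3) * ((x3 * c12) * T) := by rw [hc12x3.eq]
      _ = g1 * g2 * (x1 * (x2 * g3)) * (x3 * (c12 * T)) := by group
      _ = g1 * g2 * (x1 * (g3 * (x2 * c23))) * (x3 * (c12 * T)) := by rw [d23]
      _ = g1 * g2 * ((x1 * g3) * x2) * ((c23 * x3) * (c12 * T)) := by group
      _ = g1 * g2 * ((x1 * g3) * x2) * ((x3 * c23) * (c12 * T)) := by rw [hc23x3.eq]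
      _ = g1 * g2 * ((x1 * g3) * (x2 * x3)) * (c23 * (c12 * T)) := by group
      _ = g1 * g2 * ((g3 * (x1 * c13)) * (x2 * x3)) * (c23 * (c12 * T)) := by rw [d13]
      _ = g1 * g2 * g3 * x1 * ((c13 * x2) * (x3 * (c23 * (c12 * T)))) := by group
      _ = g1 * g2 * g3 * x1 * ((x2 * c13) * (x3 * (c23 * (c12 * T)))) := by rw [hc13x2.eq]
      _ = g1 * g2 * g3 * x1 * (x2 * ((c13 * x3) * (c23 * (c12 * T)))) := by group
      _ = g1 * g2 * g3 * x1 * (x2 * ((x3 * c13) * (c23 * (c12 * T)))) := by rw [hc13x3.eq]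
      _ = g1 * g2 * g3 * (x1 * x2 * x3) * (c13 * (c23 * (c12 * T))) := by group
  have h5 := key1.symm.trans h2
  rw [h1, mul_one] at h5
  have h4 : (g1 * g2 * g3)⁻¹ = c13 * (c23 * (c12 * T)) :=
    inv_eq_of_mul_eq_one_right h5
  rw [h4]
  calc c13 * (c23 * (c12 * T))
      = c13 * ((c23 * c12) * T) := by group
    _ = c13 * ((c12 * c23) * T) := by rw [← hE2.eq]
    _ = (c13 * c12) * (c23 * T) := by group
    _ = (c12 * c13) * (c23 * T) := by rw [← hE1.eq]
    _ = c12 * (c13 * (c23 * T)) := by group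
    _ = c12 * (c13 * (T * c23)) := by rw [← hTc23.eq]
    _ = c12 * ((c13 * T) * c23) := by group
    _ = c12 * ((T * c13) * c23) := by rw [← hTc13.eq]
    _ = c12 * (T * (c13 * c23)) := by group

/-- The commutator `[g3, x3]` splits as `[x1,g3]·[x2,g3]` when `x1 x2 x3 = 1`. -/
lemma split_aux (x1 x2 x3 g3 c13 c23 : G)
    (h1 : x1 * x2 * x3 = 1)
    (d13 : x1 * g3 = g3 * (x1 * c13))
    (d23 : x2 * g3 = g3 * (x2 * c23))
    (hc23x1 : Commute c23 x1) (hc23x2 : Commute c23 x2)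
    (hc13x1 : Commute c13 x1) :
    pcomm g3 x3 = c13 * c23 := by
  have hx3 : x3 = x2⁻¹ * x1⁻¹ := by
    have h2 : x2⁻¹ * (x1⁻¹ * (x1 * x2 * x3)) = x2⁻¹ * (x1⁻¹ * 1) := by rw [h1]
    simpa [mul_assoc] using h2
  calc pcomm g3 x3
      = g3⁻¹ * (x1 * (x2 * g3)) * (x2⁻¹ * x1⁻¹) := by rw [pcomm, hx3]; group
    _ = g3⁻¹ * (x1 * (g3 * (x2 * c23))) * (x2⁻¹ * x1⁻¹) := by rw [d23]
    _ = g3⁻¹ * (x1 * g3) * ((x2 * c23) * (x2⁻¹ * x1⁻¹)) := by group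
    _ = g3⁻¹ * (x1 * g3) * ((c23 * x2) * (x2⁻¹ * x1⁻¹)) := by rw [← hc23x2.eq]
    _ = g3⁻¹ * (x1 * g3) * (c23 * x1⁻¹) := by group
    _ = g3⁻¹ * (x1 * g3) * (x1⁻¹ * c23) := by rw [hc23x1.inv_right.eq]
    _ = g3⁻¹ * (g3 * (x1 * c13)) * (x1⁻¹ * c23) := by rw [d13]
    _ = x1 * ((c13 * x1⁻¹) * c23) := by group
    _ = x1 * ((x1⁻¹ * c13) * c23) := by rw [hc13x1.inv_right.eq]
    _ = c13 * c23 := by group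

end Aux

/-- Let `G` be nilpotent of class at most `3` and `α` an automorphism with
`α ^ 3 = 1`.  Suppose `x, g ∈ G` satisfy `x * x^α * x^{α²} = 1` and
`(g x) * (g x)^α * (g x)^{α²} = 1`, and that `[a,b,c] = 1` whenever
`a, b, c ∈ {x, x^α, x^{α²}, h}` with at least two of `a, b, c` among
`{x, x^α, x^{α²}}`, for every `h ∈ G`.  Then
`(g * g^α * g^{α²})⁻¹ = [x, g^α] * [x, g^α, g^{α²}] * [g^{α²}, x^{α²}]`. -/
theorem twisted_cube_commutator_formula {G : Type*} [Group G]
    (hnil : (⊤ : Subgroup G).lowerCentralSeries 3 = ⊥)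
    (α : MulAut G) (hα : α ^ 3 = 1) (x g : G)
    (hx : x * α x * (α ^ 2) x = 1)
    (hgx : (g * x) * α (g * x) * (α ^ 2) (g * x) = 1)
    (hcomm : ∀ h a b c : G,
      a ∈ ({x, α x, (α ^ 2) x, h} : Set G) →
      b ∈ ({x, α x, (α ^ 2) x, h} : Set G) →
      c ∈ ({x, α x, (α ^ 2) x, h} : Set G) →
      ((a ∈ ({x, α x, (α ^ 2) x} : Set G) ∧ b ∈ ({x, α x, (α ^ 2) x} : Set G)) ∨
       (a ∈ ({x, α x, (α ^ 2) x} : Set G) ∧ c ∈ ({x, α x, (α ^ 2) x} : Set G)) ∨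
       (b ∈ ({x, α x, (α ^ 2) x} : Set G) ∧ c ∈ ({x, α x, (α ^ 2) x} : Set G))) →
      pcomm (pcomm a b) c = 1) :
    (g * α g * (α ^ 2) g)⁻¹ =
      pcomm x (α g) * pcomm (pcomm x (α g)) ((α ^ 2) g) *
        pcomm ((α ^ 2) g) ((α ^ 2) x) := by
  simp only [map_mul] at hgx
  set x1 := x with hx1
  set x2 := α x with hx2
  set x3 := (α ^ 2) x with hx3
  set g2 := α g with hg2
  set g3 := (α ^ 2) g with hg3
  set c12 := pcomm x1 g2 with hc12
  set c13 := pcomm x1 g3 with hc13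
  set c23 := pcomm x2 g3 with hc23
  set T := pcomm c12 g3 with hT
  -- commutation facts from hcomm
  have c12x2 : Commute c12 x2 :=
    commute_of_pcomm (hcomm g2 x1 g2 x2 (by simp) (by simp) (by simp)
      (Or.inr (Or.inl ⟨by simp, by simp⟩)))
  have c12x3 : Commute c12 x3 :=
    commute_of_pcomm (hcomm g2 x1 g2 x3 (by simp) (by simp) (by simp)
      (Or.inr (Or.inl ⟨by simp, by simp⟩)))
  have c23x1 : Commute c23 x1 :=
    commute_of_pcomm (hcomm g3 x2 g3 x1 (by simp) (by simp) (by simp)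
      (Or.inr (Or.inl ⟨by simp, by simp⟩)))
  have c23x2 : Commute c23 x2 :=
    commute_of_pcomm (hcomm g3 x2 g3 x2 (by simp) (by simp) (by simp)
      (Or.inr (Or.inl ⟨by simp, by simp⟩)))
  have c23x3 : Commute c23 x3 :=
    commute_of_pcomm (hcomm g3 x2 g3 x3 (by simp) (by simp) (by simp)
      (Or.inr (Or.inl ⟨by simp, by simp⟩)))
  have c13x1 : Commute c13 x1 :=
    commute_of_pcomm (hcomm g3 x1 g3 x1 (by simp) (by simp) (by simp)
      (Or.inr (Or.inl ⟨by simp, by simp⟩)))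
  have c13x2 : Commute c13 x2 :=
    commute_of_pcomm (hcomm g3 x1 g3 x2 (by simp) (by simp) (by simp)
      (Or.inr (Or.inl ⟨by simp, by simp⟩)))
  have c13x3 : Commute c13 x3 :=
    commute_of_pcomm (hcomm g3 x1 g3 x3 (by simp) (by simp) (by simp)
      (Or.inr (Or.inl ⟨by simp, by simp⟩)))
  -- weight-3 commutators are central
  have hTmem : T ∈ (⊤ : Subgroup G).lowerCentralSeries 2 := pcomm_mem_lcs_succ (pcomm_mem_lcs1 x1 g2) g3
  have hTcent : ∀ z : G, Commute T z := fun z => central_of_lcs2 hnil hTmem z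
  -- commutators of commutators are trivial
  have hE1 : Commute c12 c13 :=
    commute_of_lcs1 hnil (pcomm_mem_lcs1 x1 g2) (pcomm_mem_lcs1 x1 g3)
  have hE2 : Commute c12 c23 :=
    commute_of_lcs1 hnil (pcomm_mem_lcs1 x1 g2) (pcomm_mem_lcs1 x2 g3)
  -- commutator expansion identities (free identities)
  have d12 : x1 * g2 = g2 * (x1 * c12) := by rw [hc12, pcomm]; group
  have d13 : x1 * g3 = g3 * (x1 * c13) := by rw [hc13, pcomm]; group
  have d23 : x2 * g3 = g3 * (x2 * c23) := by rw [hc23, pcomm]; group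
  have dT : c12 * g3 = g3 * (c12 * T) := by rw [hT, pcomm]; group
  have hsplit : pcomm g3 x3 = c13 * c23 :=
    split_aux x1 x2 x3 g3 c13 c23 hx d13 d23 c23x1 c23x2 c13x1
  have main : (g * g2 * g3)⁻¹ = c12 * (T * (c13 * c23)) :=
    key_aux x1 x2 x3 g g2 g3 c12 c13 c23 T hx hgx d12 d13 d23 dT
      c12x2 c12x3 c23x3 c13x2 c13x3 (hTcent c13) (hTcent c23) (hTcent x3) hE1 hE2
  rw [main, hsplit, mul_assoc]
end
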